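/- arXiv:2104.06102 — 8 statements merged into one kernel-verified Lean document; each statement's English description precedes it below -/
import Mathlib

section
/- Let d ≥ 1, let λ̃ > 0, M > 0, λ < 0 with λ̃ + λ < 0, b ∈ ℝ and z ∈ ℝ^d. Let w : [0,∞) → ℝ^d be continuous with ‖w(t)‖₂ ≤ M e^{−λ̃ t} ‖w(0)‖₂ for all t ≥ 0. If x : [0,∞) → ℝ is differentiable and satisfies x'(t) = λ x(t) + b ⟨z, w(t)⟩ for all t ≥ 0, then for all t ≥ 0: |x(t)| ≤ e^{−λ̃ t} ( |x(0)| + ‖z‖₂ ‖w(0)‖₂ M |b| / |λ̃ + λ| ). -/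
open Real

/-- Componentwise estimate in the proof of the Proposition of Section 3:
a scalar linear ODE whose forcing term is an inner product with an
exponentially decaying vector-valued signal. -/
theorem stmt_0 (d : ℕ) (hd : 1 ≤ d) (lamT M lam : ℝ) (hlamT : 0 < lamT) (hM : 0 < M)
    (hlam : lam < 0) (hsum : lamT + lam < 0) (b : ℝ) (z : EuclideanSpace ℝ (Fin d))
    (w : ℝ → EuclideanSpace ℝ (Fin d)) (hw_cont : ContinuousOn w (Set.Ici 0))
    (hw : ∀ t ≥ (0 : ℝ), ‖w t‖ ≤ M * Real.exp (-lamT * t) * ‖w 0‖)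
    (x : ℝ → ℝ)
    (hx : ∀ t ≥ (0 : ℝ), HasDerivAt x (lam * x t + b * (inner ℝ z (w t) : ℝ)) t) :
    ∀ t ≥ (0 : ℝ), |x t| ≤
      Real.exp (-lamT * t) * (|x 0| + ‖z‖ * ‖w 0‖ * M * |b| / |lamT + lam|) := by
  intro t ht
  have hc : (0:ℝ) < -(lamT + lam) := by linarith
  set c : ℝ := -(lamT + lam) with hc_def
  set K : ℝ := ‖z‖ * ‖w 0‖ * M * |b| with hK_def
  have hKnn : 0 ≤ K := by positivity
  have hw0 : 0 ≤ ‖w 0‖ := norm_nonneg _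
  set g : ℝ → ℝ := fun s => Real.exp (-lam * s) * x s with hg_def
  set f : ℝ → ℝ := fun s => Real.exp (-lam * s) * (b * (inner ℝ z (w s) : ℝ)) with hf_def
  have hg' : ∀ s ∈ Set.uIcc (0:ℝ) t, HasDerivAt g (f s) s := by
    intro s hs
    rw [Set.uIcc_of_le ht] at hs
    have hx' := hx s hs.1
    have h1 : HasDerivAt (fun u : ℝ => Real.exp (-lam * u)) (Real.exp (-lam * s) * (-lam)) s :=
      (((hasDerivAt_id s).const_mul (-lam)).exp).congr_deriv (by simp [Function.id_def])
    have h2 := h1.mul hx'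
    refine HasDerivAt.congr_deriv (f := g) h2 ?_
    show _ = Real.exp (-lam * s) * (b * (inner ℝ z (w s) : ℝ))
    ring
  have hcont_inner : ContinuousOn (fun s => (inner ℝ z (w s) : ℝ)) (Set.Icc 0 t) :=
    (continuousOn_const.inner (hw_cont.mono (fun s hs => hs.1)))
  have hf_cont : ContinuousOn f (Set.Icc 0 t) := by
    apply ContinuousOn.mul
    · exact (Real.continuous_exp.comp (continuous_const.mul continuous_id)).continuousOn
    · exact continuousOn_const.mul hcont_inner
  have hf_int : IntervalIntegrable f MeasureTheory.volume 0 t := by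
    apply ContinuousOn.intervalIntegrable
    rwa [Set.uIcc_of_le ht]
  have hFTC := intervalIntegral.integral_eq_sub_of_hasDerivAt hg' hf_int
  have hg0 : g 0 = x 0 := by simp [hg_def]
  have hbound : ∀ s ∈ Set.Ioc (0:ℝ) t, ‖f s‖ ≤ K * Real.exp (c * s) := by
    intro s hs
    have hs0 : (0:ℝ) ≤ s := le_of_lt hs.1
    have h1 : |(inner ℝ z (w s) : ℝ)| ≤ ‖z‖ * ‖w s‖ := abs_real_inner_le_norm z (w s)
    have h2 := hw s hs0
    have heq : ‖f s‖ = Real.exp (-lam * s) * (|b| * |(inner ℝ z (w s) : ℝ)|) := by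
      simp [hf_def, abs_mul, Real.abs_exp, mul_assoc]
    rw [heq]
    have h3 : |(inner ℝ z (w s) : ℝ)| ≤ ‖z‖ * (M * Real.exp (-lamT * s) * ‖w 0‖) := by
      refine h1.trans ?_
      exact mul_le_mul_of_nonneg_left h2 (norm_nonneg z)
    calc Real.exp (-lam * s) * (|b| * |(inner ℝ z (w s) : ℝ)|)
        ≤ Real.exp (-lam * s) * (|b| * (‖z‖ * (M * Real.exp (-lamT * s) * ‖w 0‖))) := by
          apply mul_le_mul_of_nonneg_left _ (le_of_lt (Real.exp_pos _))
          exact mul_le_mul_of_nonneg_left h3 (abs_nonneg b)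
      _ = K * Real.exp (c * s) := by
          rw [hK_def, hc_def, show -(lamT + lam) * s = -lam * s + -lamT * s by ring,
            Real.exp_add]
          ring
  have hint_bound : |∫ s in (0:ℝ)..t, f s| ≤ |∫ s in (0:ℝ)..t, K * Real.exp (c * s)| := by
    have := intervalIntegral.norm_integral_le_of_norm_le (μ := MeasureTheory.volume)
      (a := 0) (b := t) (f := f) (g := fun s => K * Real.exp (c * s)) ht ?_ ?_
    · simpa only [Real.norm_eq_abs] using this.trans (le_abs_self _)
    · refine Filter.Eventually.of_forall ?_
      intro s hs
      exact hbound s hs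
    · exact Continuous.intervalIntegrable
        (continuous_const.mul (Real.continuous_exp.comp (continuous_const.mul continuous_id))) 0 t
  have hexp_int : (∫ s in (0:ℝ)..t, K * Real.exp (c * s))
      = K * ((Real.exp (c * t) - 1) / c) := by
    have hd : ∀ s ∈ Set.uIcc (0:ℝ) t,
        HasDerivAt (fun u => Real.exp (c * u) / c) (Real.exp (c * s)) s := by
      intro s _
      have h1 : HasDerivAt (fun u : ℝ => Real.exp (c * u)) (Real.exp (c * s) * c) s :=
        (((hasDerivAt_id s).const_mul c).exp).congr_deriv (by simp [Function.id_def])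
      have := h1.div_const c
      exact this.congr_deriv (by rw [mul_div_assoc, div_self hc.ne', mul_one])
    have hint : IntervalIntegrable (fun s => Real.exp (c * s)) MeasureTheory.volume 0 t :=
      Continuous.intervalIntegrable
        (Real.continuous_exp.comp (continuous_const.mul continuous_id)) 0 t
    rw [intervalIntegral.integral_const_mul,
      intervalIntegral.integral_eq_sub_of_hasDerivAt hd hint]
    simp only [mul_zero, Real.exp_zero]
    ring
  -- now assemble
  have hgt : |g t| ≤ |x 0| + K * ((Real.exp (c * t) - 1) / c) := by
    have : g t = x 0 + ∫ s in (0:ℝ)..t, f s := by rw [hFTC]; rw [hg0]; ring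
    rw [this]
    calc |x 0 + ∫ s in (0:ℝ)..t, f s| ≤ |x 0| + |∫ s in (0:ℝ)..t, f s| := abs_add_le _ _
      _ ≤ |x 0| + K * ((Real.exp (c * t) - 1) / c) := by
          refine add_le_add_right (hint_bound.trans_eq ?_) _
          rw [hexp_int, abs_of_nonneg]
          have h1 : (1:ℝ) ≤ Real.exp (c * t) := by
            rw [show (1:ℝ) = Real.exp 0 by simp]
            exact Real.exp_le_exp.mpr (by positivity)
          have h2 : (0:ℝ) ≤ Real.exp (c * t) - 1 := by linarith
          positivity
  have hxt : x t = Real.exp (lam * t) * g t := by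
    simp only [hg_def]
    rw [← mul_assoc, ← Real.exp_add, show lam * t + -lam * t = 0 by ring,
      Real.exp_zero, one_mul]
  rw [hxt, abs_mul, Real.abs_exp]
  have hstep : Real.exp (lam * t) * |g t|
      ≤ Real.exp (lam * t) * (|x 0| + K * ((Real.exp (c * t) - 1) / c)) :=
    mul_le_mul_of_nonneg_left hgt (le_of_lt (Real.exp_pos _))
  refine hstep.trans ?_
  have habs : |lamT + lam| = c := by rw [hc_def, abs_of_neg hsum]
  rw [habs]
  have he1 : Real.exp (lam * t) ≤ Real.exp (-lamT * t) :=
    Real.exp_le_exp.mpr (by nlinarith)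
  have he2 : Real.exp (lam * t) * (Real.exp (c * t) - 1) ≤ Real.exp (-lamT * t) := by
    have : Real.exp (lam * t) * Real.exp (c * t) = Real.exp (-lamT * t) := by
      rw [← Real.exp_add]; congr 1; rw [hc_def]; ring
    nlinarith [Real.exp_pos (lam * t)]
  have hx0 : (0:ℝ) ≤ |x 0| := abs_nonneg _
  have hKc : 0 ≤ K / c := by positivity
  calc Real.exp (lam * t) * (|x 0| + K * ((Real.exp (c * t) - 1) / c))
      = Real.exp (lam * t) * |x 0|
        + (Real.exp (lam * t) * (Real.exp (c * t) - 1)) * (K / c) := by ring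
    _ ≤ Real.exp (-lamT * t) * |x 0| + Real.exp (-lamT * t) * (K / c) := by
        gcongr
    _ = Real.exp (-lamT * t) * (|x 0| + K / c) := by ring
end

section
/- Let j < n be positive integers, λ̃ > 0, M > 0, and for each k with j+1 ≤ k ≤ n let λ_k < 0 satisfy λ̃ + λ_k < 0 and let b_k ∈ ℝ. Let z_x, z_e ∈ ℝ^{2j} and set ‖z‖₂² = ‖z_x‖₂² + ‖z_e‖₂². Suppose w : [0,∞) → ℝ^{2j} is continuous with ‖w(t)‖₂ ≤ M e^{−λ̃ t} ‖w(0)‖₂ for all t ≥ 0, and for each k = j+1,…,n the functions x_k, e_k : [0,∞) → ℝ are differentiable with x_k'(t) = λ_k x_k(t) + b_k ⟨z_x, w(t)⟩ and e_k'(t) = λ_k e_k(t) + b_k ⟨z_e, w(t)⟩. Let X(t) ∈ ℝ^{2n} be the concatenation of w(t) with (x_{j+1}(t),…,x_n(t),e_{j+1}(t),…,e_n(t)). Then for all t ≥ 0: ‖X(t)‖₂² ≤ max{2, 2M²} e^{−2λ̃ t} ‖X(0)‖₂² · ( 1 + ‖z‖₂² Σ_{k=j+1}^{n} ( |b_k|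 / |λ̃ + λ_k| )² ). -/
open Real intervalIntegral

lemma exp_integral (a t : ℝ) (ha : a ≠ 0) :
    ∫ s in (0:ℝ)..t, Real.exp (a * s) = (Real.exp (a * t) - 1) / a := by
  have hd : ∀ s ∈ Set.uIcc (0:ℝ) t,
      HasDerivAt (fun s => Real.exp (a * s) / a) (Real.exp (a * s)) s := by
    intro s _
    have h1 : HasDerivAt (fun s : ℝ => Real.exp (a * s)) (Real.exp (a * s) * a) s := by
      simpa [mul_comm] using ((hasDerivAt_id s).const_mul a).exp
    have := h1.div_const a
    simpa [mul_div_assoc, mul_div_cancel_right₀ _ ha] using this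
  rw [integral_eq_sub_of_hasDerivAt hd
    ((Continuous.continuousOn (by continuity)).intervalIntegrable)]
  simp
  ring

lemma key_decay (c lamT K : ℝ) (hc : lamT + c < 0) (hlamT : 0 < lamT) (hK : 0 ≤ K)
    (f u : ℝ → ℝ) (hu_cont : ContinuousOn u (Set.Ici 0))
    (hu : ∀ s ≥ (0:ℝ), |u s| ≤ K * Real.exp (-lamT * s))
    (hf : ∀ s ≥ (0:ℝ), HasDerivAt f (c * f s + u s) s) :
    ∀ t ≥ (0:ℝ), |f t| ≤ Real.exp (-lamT * t) * (|f 0| + K / |lamT + c|) := by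
  intro t ht
  set a : ℝ := -(lamT + c) with ha_def
  have ha : 0 < a := by simp [ha_def]; linarith
  set y : ℝ → ℝ := fun s => Real.exp (-c * s) * f s with hy_def
  have hyderiv : ∀ s ∈ Set.uIcc (0:ℝ) t, HasDerivAt y (Real.exp (-c * s) * u s) s := by
    intro s hs
    rw [Set.uIcc_of_le ht] at hs
    have hs0 : (0:ℝ) ≤ s := hs.1
    have h1 : HasDerivAt (fun s => Real.exp (-c * s)) (-c * Real.exp (-c * s)) s := by
      have := ((hasDerivAt_id s).const_mul (-c)).exp
      simpa [mul_comm] using this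
    have := h1.mul (hf s hs0)
    exact this.congr_deriv (by ring)
  have hucont' : ContinuousOn (fun s => Real.exp (-c * s) * u s) (Set.uIcc 0 t) := by
    rw [Set.uIcc_of_le ht]
    exact (Continuous.continuousOn (by continuity)).mul
      (hu_cont.mono (Set.Icc_subset_Ici_self))
  have hint : IntervalIntegrable (fun s => Real.exp (-c * s) * u s) MeasureTheory.volume 0 t :=
    hucont'.intervalIntegrable
  have hftc : ∫ s in (0:ℝ)..t, Real.exp (-c * s) * u s = y t - y 0 :=
    integral_eq_sub_of_hasDerivAt hyderiv hint
  have hbound : |∫ s in (0:ℝ)..t, Real.exp (-c * s) * u s| ≤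
      K * ((Real.exp (a * t) - 1) / a) := by
    have h1 : |∫ s in (0:ℝ)..t, Real.exp (-c * s) * u s| ≤
        ∫ s in (0:ℝ)..t, |Real.exp (-c * s) * u s| :=
      intervalIntegral.abs_integral_le_integral_abs ht
    have h2 : ∫ s in (0:ℝ)..t, |Real.exp (-c * s) * u s| ≤
        ∫ s in (0:ℝ)..t, K * Real.exp (a * s) := by
      apply intervalIntegral.integral_mono_on ht
      · exact ((hucont'.abs).mono (by rw [Set.uIcc_of_le ht])).intervalIntegrable
      · exact (Continuous.continuousOn (by continuity)).intervalIntegrable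
      · intro s hs
        have hexp : Real.exp (-c * s) * Real.exp (-lamT * s) = Real.exp (a * s) := by
          rw [← Real.exp_add]; congr 1; rw [ha_def]; ring
        calc |Real.exp (-c * s) * u s| = Real.exp (-c * s) * |u s| := by
              rw [abs_mul, abs_of_pos (Real.exp_pos _)]
          _ ≤ Real.exp (-c * s) * (K * Real.exp (-lamT * s)) :=
              mul_le_mul_of_nonneg_left (hu s hs.1) (Real.exp_pos _).le
          _ = K * Real.exp (a * s) := by rw [← hexp]; ring
    have h3 : ∫ s in (0:ℝ)..t, K * Real.exp (a * s) = K * ((Real.exp (a * t) - 1) / a) := by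
      rw [intervalIntegral.integral_const_mul, exp_integral a t (ne_of_gt ha)]
    linarith
  -- now bound |f t|
  have hyt : |y t| ≤ |f 0| + K * ((Real.exp (a * t) - 1) / a) := by
    have heq : y t - y 0 = ∫ s in (0:ℝ)..t, Real.exp (-c * s) * u s := hftc.symm
    have hy0 : y 0 = f 0 := by simp [hy_def]
    have habs : |y t - y 0| ≤ K * ((Real.exp (a * t) - 1) / a) := by
      rw [heq]; exact hbound
    have h4 : |y t| ≤ |y 0| + |y t - y 0| := by
      simpa using abs_add_le (y 0) (y t - y 0)
    rw [hy0] at habs h4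
    linarith
  have hft : f t = Real.exp (c * t) * y t := by
    simp only [hy_def]
    rw [← mul_assoc, ← Real.exp_add]
    simp
  have habs_la : |lamT + c| = a := by rw [abs_of_neg hc]
  have hexp1 : Real.exp (c * t) * Real.exp (a * t) = Real.exp (-lamT * t) := by
    rw [← Real.exp_add]; congr 1; rw [ha_def]; ring
  have hexp2 : Real.exp (c * t) ≤ Real.exp (-lamT * t) := by
    apply Real.exp_le_exp.2
    nlinarith
  rw [hft, abs_mul, abs_of_pos (Real.exp_pos _), habs_la]
  have h5 : Real.exp (c * t) * |y t| ≤
      Real.exp (c * t) * (|f 0| + K * ((Real.exp (a * t) - 1) / a)) :=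
    mul_le_mul_of_nonneg_left hyt (Real.exp_pos _).le
  have h6 : Real.exp (c * t) * (|f 0| + K * ((Real.exp (a * t) - 1) / a)) ≤
      Real.exp (-lamT * t) * (|f 0| + K / a) := by
    have hainv : (0:ℝ) < a⁻¹ := inv_pos.2 ha
    have hf0 : (0:ℝ) ≤ |f 0| := abs_nonneg _
    have hprod : K * a⁻¹ * (Real.exp (c * t) * Real.exp (a * t))
        = K * a⁻¹ * Real.exp (-lamT * t) := by rw [hexp1]
    rw [div_eq_mul_inv, div_eq_mul_inv]
    nlinarith [hprod, mul_nonneg (sub_nonneg.2 hexp2) hf0,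
      mul_nonneg (mul_nonneg hK hainv.le) (Real.exp_pos (c * t)).le]
  linarith

/-- Proposition of Section 3: exponential decay bound for the finite-dimensional
closed-loop system extended by additional modes driven by the stabilized core.
`X2 t` is the squared Euclidean norm of the concatenation of `w t` with
`(x_{j+1}(t),…,x_n(t),e_{j+1}(t),…,e_n(t))`. -/
theorem stmt_1 (j n : ℕ) (hj : 0 < j) (hjn : j < n) (lamT M : ℝ) (hlamT : 0 < lamT)
    (hM : 0 < M) (lam b : ℕ → ℝ)
    (hlam : ∀ k, j + 1 ≤ k → k ≤ n → lam k < 0 ∧ lamT + lam k < 0)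
    (zx ze : EuclideanSpace ℝ (Fin (2 * j)))
    (w : ℝ → EuclideanSpace ℝ (Fin (2 * j))) (hw_cont : ContinuousOn w (Set.Ici 0))
    (hw : ∀ t ≥ (0 : ℝ), ‖w t‖ ≤ M * Real.exp (-lamT * t) * ‖w 0‖)
    (x e : ℕ → ℝ → ℝ)
    (hx : ∀ k, j + 1 ≤ k → k ≤ n → ∀ t ≥ (0 : ℝ),
      HasDerivAt (x k) (lam k * x k t + b k * (inner ℝ zx (w t) : ℝ)) t)
    (he : ∀ k, j + 1 ≤ k → k ≤ n → ∀ t ≥ (0 : ℝ),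
      HasDerivAt (e k) (lam k * e k t + b k * (inner ℝ ze (w t) : ℝ)) t)
    (X2 : ℝ → ℝ)
    (hX2 : ∀ t, X2 t = ‖w t‖ ^ 2 + ∑ k ∈ Finset.Icc (j + 1) n, ((x k t) ^ 2 + (e k t) ^ 2)) :
    ∀ t ≥ (0 : ℝ), X2 t ≤ max 2 (2 * M ^ 2) * Real.exp (-(2 * lamT) * t) * X2 0 *
      (1 + (‖zx‖ ^ 2 + ‖ze‖ ^ 2) *
        ∑ k ∈ Finset.Icc (j + 1) n, (|b k| / |lamT + lam k|) ^ 2) := by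

  intro t ht
  set W : ℝ := ‖w 0‖ with hW_def
  have hWnn : (0:ℝ) ≤ W := norm_nonneg _
  set E : ℝ := Real.exp (-(2 * lamT) * t) with hE_def
  have hEpos : 0 < E := Real.exp_pos _
  have hE2 : Real.exp (-lamT * t) ^ 2 = E := by
    rw [sq, ← Real.exp_add, hE_def]; congr 1; ring
  -- generic per-mode squared decay
  have key2 : ∀ (z : EuclideanSpace ℝ (Fin (2 * j))) (g : ℕ → ℝ → ℝ),
      (∀ k, j + 1 ≤ k → k ≤ n → ∀ s ≥ (0:ℝ),
        HasDerivAt (g k) (lam k * g k s + b k * (inner ℝ z (w s) : ℝ)) s) →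
      ∀ k ∈ Finset.Icc (j + 1) n, (g k t) ^ 2 ≤
        E * (2 * (g k 0) ^ 2 + 2 * M ^ 2 * W ^ 2 * ‖z‖ ^ 2 * (|b k| / |lamT + lam k|) ^ 2) := by
    intro z g hg k hk
    obtain ⟨hk1, hk2⟩ := Finset.mem_Icc.mp hk
    obtain ⟨hlam1, hlam2⟩ := hlam k hk1 hk2
    set K : ℝ := |b k| * ‖z‖ * (M * W) with hK_def
    have hKnn : (0:ℝ) ≤ K := by positivity
    have hu_cont : ContinuousOn (fun s => b k * (inner ℝ z (w s) : ℝ)) (Set.Ici 0) :=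
      continuousOn_const.mul (continuousOn_const.inner hw_cont)
    have hu : ∀ s ≥ (0:ℝ), |b k * (inner ℝ z (w s) : ℝ)| ≤ K * Real.exp (-lamT * s) := by
      intro s hs
      have h1 : |(inner ℝ z (w s) : ℝ)| ≤ ‖z‖ * ‖w s‖ := abs_real_inner_le_norm z (w s)
      have h2 := hw s hs
      have h3 : ‖z‖ * ‖w s‖ ≤ ‖z‖ * (M * Real.exp (-lamT * s) * W) :=
        mul_le_mul_of_nonneg_left h2 (norm_nonneg z)
      calc |b k * (inner ℝ z (w s) : ℝ)| = |b k| * |(inner ℝ z (w s) : ℝ)| := abs_mul _ _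
        _ ≤ |b k| * (‖z‖ * (M * Real.exp (-lamT * s) * W)) :=
            mul_le_mul_of_nonneg_left (h1.trans h3) (abs_nonneg _)
        _ = K * Real.exp (-lamT * s) := by rw [hK_def]; ring
    have hdecay := key_decay (lam k) lamT K hlam2 hlamT hKnn (g k)
      (fun s => b k * (inner ℝ z (w s) : ℝ)) hu_cont hu (hg k hk1 hk2) t ht
    set A : ℝ := |lamT + lam k| with hA_def
    have hApos : 0 < A := abs_pos.2 (ne_of_lt hlam2)
    have hKA : (K / A) ^ 2 = M ^ 2 * W ^ 2 * ‖z‖ ^ 2 * (|b k| / A) ^ 2 := by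
      rw [div_pow, div_pow, hK_def]; ring
    have hRnn : (0:ℝ) ≤ Real.exp (-lamT * t) * (|g k 0| + K / A) := by positivity
    have hsq : (g k t) ^ 2 ≤ (Real.exp (-lamT * t) * (|g k 0| + K / A)) ^ 2 := by
      rw [← sq_abs (g k t)]
      exact pow_le_pow_left₀ (abs_nonneg _) hdecay 2
    have hexpand : (Real.exp (-lamT * t) * (|g k 0| + K / A)) ^ 2 ≤
        E * (2 * (g k 0) ^ 2 + 2 * (K / A) ^ 2) := by
      rw [mul_pow, hE2]
      apply mul_le_mul_of_nonneg_left _ hEpos.le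
      have h4 : 0 ≤ (|g k 0| - K / A) ^ 2 := sq_nonneg _
      have h5 : |g k 0| ^ 2 = (g k 0) ^ 2 := sq_abs _
      nlinarith
    calc (g k t) ^ 2 ≤ E * (2 * (g k 0) ^ 2 + 2 * (K / A) ^ 2) := hsq.trans hexpand
      _ = E * (2 * (g k 0) ^ 2 + 2 * M ^ 2 * W ^ 2 * ‖z‖ ^ 2 * (|b k| / A) ^ 2) := by
          rw [hKA]; ring
  -- sums
  set S : ℝ := ∑ k ∈ Finset.Icc (j + 1) n, (|b k| / |lamT + lam k|) ^ 2 with hS_def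
  set Sig0 : ℝ := ∑ k ∈ Finset.Icc (j + 1) n, ((x k 0) ^ 2 + (e k 0) ^ 2) with hSig0_def
  have hSnn : 0 ≤ S := Finset.sum_nonneg fun k _ => sq_nonneg _
  have hSig0nn : 0 ≤ Sig0 := Finset.sum_nonneg fun k _ => by positivity
  set Z : ℝ := ‖zx‖ ^ 2 + ‖ze‖ ^ 2 with hZ_def
  have hZnn : 0 ≤ Z := by positivity
  have hsum : ∑ k ∈ Finset.Icc (j + 1) n, ((x k t) ^ 2 + (e k t) ^ 2) ≤
      2 * E * Sig0 + 2 * E * M ^ 2 * W ^ 2 * Z * S := by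
    have hterm : ∀ k ∈ Finset.Icc (j + 1) n, (x k t) ^ 2 + (e k t) ^ 2 ≤
        2 * E * ((x k 0) ^ 2 + (e k 0) ^ 2) +
          (2 * E * M ^ 2 * W ^ 2 * Z) * (|b k| / |lamT + lam k|) ^ 2 := by
      intro k hk
      have h1 := key2 zx x hx k hk
      have h2 := key2 ze e he k hk
      have : E * (2 * (x k 0) ^ 2 + 2 * M ^ 2 * W ^ 2 * ‖zx‖ ^ 2 * (|b k| / |lamT + lam k|) ^ 2)
          + E * (2 * (e k 0) ^ 2 + 2 * M ^ 2 * W ^ 2 * ‖ze‖ ^ 2 * (|b k| / |lamT + lam k|) ^ 2)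
          = 2 * E * ((x k 0) ^ 2 + (e k 0) ^ 2) +
            (2 * E * M ^ 2 * W ^ 2 * Z) * (|b k| / |lamT + lam k|) ^ 2 := by
        rw [hZ_def]; ring
      linarith
    calc ∑ k ∈ Finset.Icc (j + 1) n, ((x k t) ^ 2 + (e k t) ^ 2) ≤
        ∑ k ∈ Finset.Icc (j + 1) n, (2 * E * ((x k 0) ^ 2 + (e k 0) ^ 2) +
          (2 * E * M ^ 2 * W ^ 2 * Z) * (|b k| / |lamT + lam k|) ^ 2) :=
          Finset.sum_le_sum hterm
      _ = 2 * E * Sig0 + 2 * E * M ^ 2 * W ^ 2 * Z * S := by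
          rw [Finset.sum_add_distrib, ← Finset.mul_sum, ← Finset.mul_sum]
  -- w bound
  have hwt : ‖w t‖ ^ 2 ≤ M ^ 2 * E * W ^ 2 := by
    have h1 := hw t ht
    have h2 : ‖w t‖ ^ 2 ≤ (M * Real.exp (-lamT * t) * W) ^ 2 :=
      pow_le_pow_left₀ (norm_nonneg _) h1 2
    calc ‖w t‖ ^ 2 ≤ (M * Real.exp (-lamT * t) * W) ^ 2 := h2
      _ = M ^ 2 * Real.exp (-lamT * t) ^ 2 * W ^ 2 := by ring
      _ = M ^ 2 * E * W ^ 2 := by rw [hE2]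
  -- assemble
  set C : ℝ := max 2 (2 * M ^ 2) with hC_def
  have hC2 : (2:ℝ) ≤ C := le_max_left _ _
  have hCM : 2 * M ^ 2 ≤ C := le_max_right _ _
  have hM2 : M ^ 2 ≤ C := by nlinarith [sq_nonneg M]
  have hX20 : X2 0 = W ^ 2 + Sig0 := by rw [hX2 0, hW_def, hSig0_def]
  rw [hX2 t, hX20]
  have ha : 0 ≤ E * ((C - M ^ 2) * W ^ 2) :=
    mul_nonneg hEpos.le (mul_nonneg (by linarith) (sq_nonneg W))
  have hb : 0 ≤ E * ((C - 2) * Sig0) :=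
    mul_nonneg hEpos.le (mul_nonneg (by linarith) hSig0nn)
  have hc : 0 ≤ E * ((C - 2 * M ^ 2) * (W ^ 2 * (Z * S))) := by
    have h0 : 0 ≤ W ^ 2 * (Z * S) := by positivity
    exact mul_nonneg hEpos.le (mul_nonneg (by linarith) h0)
  have hd : 0 ≤ E * (C * (Sig0 * (Z * S))) := by
    have h0 : 0 ≤ Sig0 * (Z * S) := mul_nonneg hSig0nn (mul_nonneg hZnn hSnn)
    exact mul_nonneg hEpos.le (mul_nonneg (by linarith) h0)
  have hgoal : C * E * (W ^ 2 + Sig0) * (1 + Z * S) =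
      M ^ 2 * E * W ^ 2 + (2 * E * Sig0 + 2 * E * M ^ 2 * W ^ 2 * Z * S) +
      (E * ((C - M ^ 2) * W ^ 2) + E * ((C - 2) * Sig0) +
        E * ((C - 2 * M ^ 2) * (W ^ 2 * (Z * S))) + E * (C * (Sig0 * (Z * S)))) := by
    ring
  linarith [hsum, hwt, ha, hb, hc, hd, hgoal.le, hgoal.ge]
end

section
/- Let n ≥ 1 be an integer, α ≥ 1 a real number, μ < 0, and D, S ≥ 0. Suppose x_k : [0,∞) → ℝ, for k ≥ n+1, satisfy |x_k(t)| ≤ e^{μ t} |x_k(0)| + (D/k^α) S for all t ≥ 0 and all k ≥ n+1, and suppose (x_k(0))_{k ≥ n+1} is square-summable. Then for every t ≥ 0 the family (x_k(t))_{k ≥ n+1} is square-summable and ( Σ_{k≥n+1} x_k(t)² )^{1/2} ≤ e^{μ t} ( Σ_{k≥n+1} x_k(0)² )^{1/2} + (π/√6) · D S / √(n^α). -/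
open Real

private lemma tail_sum_le (n : ℕ) (hn : 1 ≤ n) :
    ∑' i : ℕ, (1 / ((n : ℝ) + 1 + i) ^ 2) ≤ 1 / (n : ℝ) := by
  have hn' : (1 : ℝ) ≤ n := by exact_mod_cast hn
  apply Real.tsum_le_of_sum_range_le (fun i => by positivity)
  intro m
  have key : ∀ i ∈ Finset.range m, (1 / ((n : ℝ) + 1 + i) ^ 2) ≤
      (fun j : ℕ => 1 / ((n : ℝ) + j)) i - (fun j : ℕ => 1 / ((n : ℝ) + j)) (i + 1) := by
    intro i _
    have h1 : (0 : ℝ) < (n : ℝ) + i := by positivity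
    have h2 : (0 : ℝ) < (n : ℝ) + 1 + i := by positivity
    have heq : (fun j : ℕ => 1 / ((n : ℝ) + j)) i - (fun j : ℕ => 1 / ((n : ℝ) + j)) (i + 1)
        = 1 / (((n : ℝ) + i) * ((n : ℝ) + 1 + i)) := by
      simp only []
      push_cast
      rw [show (n:ℝ) + (↑i + 1) = (n:ℝ) + 1 + i by ring, div_sub_div _ _ h1.ne' h2.ne']
      congr 1 <;> ring
    rw [heq]
    apply one_div_le_one_div_of_le (by positivity)
    have : (n : ℝ) + i ≤ (n : ℝ) + 1 + i := by linarith
    nlinarith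
  calc ∑ i ∈ Finset.range m, (1 / ((n : ℝ) + 1 + i) ^ 2)
      ≤ ∑ i ∈ Finset.range m,
        ((fun j : ℕ => 1 / ((n : ℝ) + j)) i - (fun j : ℕ => 1 / ((n : ℝ) + j)) (i + 1)) :=
        Finset.sum_le_sum key
    _ = 1 / ((n : ℝ) + (0 : ℕ)) - 1 / ((n : ℝ) + m) := Finset.sum_range_sub' _ m
    _ ≤ 1 / n := by
        have : (0 : ℝ) ≤ 1 / ((n : ℝ) + m) := by positivity
        simp only [Nat.cast_zero, add_zero]
        linarith

/-- The ℓ²-estimate (4.3) of Lemma 4.1: the ℓ²-norm of the fast modes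
(indexed by `k ≥ n+1`, written here as `k = n+1+i` for `i : ℕ`) decays
exponentially up to a term of order `n^{-α/2}` times the input bound `S`. -/
theorem stmt_3 (n : ℕ) (hn : 1 ≤ n) (α μ D S : ℝ) (hα : 1 ≤ α) (hμ : μ < 0)
    (hD : 0 ≤ D) (hS : 0 ≤ S) (x : ℕ → ℝ → ℝ)
    (hx : ∀ k, n + 1 ≤ k → ∀ t ≥ (0 : ℝ),
      |x k t| ≤ Real.exp (μ * t) * |x k 0| + D / (k : ℝ) ^ α * S)
    (h0 : Summable fun i : ℕ => (x (n + 1 + i) 0) ^ 2) :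
    ∀ t ≥ (0 : ℝ), (Summable fun i : ℕ => (x (n + 1 + i) t) ^ 2) ∧
      Real.sqrt (∑' i : ℕ, (x (n + 1 + i) t) ^ 2) ≤
        Real.exp (μ * t) * Real.sqrt (∑' i : ℕ, (x (n + 1 + i) 0) ^ 2) +
          Real.pi / Real.sqrt 6 * D * S / Real.sqrt ((n : ℝ) ^ α) := by
  intro t ht
  have hn' : (1 : ℝ) ≤ n := by exact_mod_cast hn
  have hn0 : (0 : ℝ) < n := by linarith
  set E : ℝ := Real.exp (μ * t) with hE
  have hE0 : 0 < E := Real.exp_pos _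
  -- the two comparison sequences
  set a : ℕ → ℝ := fun i => E * |x (n + 1 + i) 0| with ha_def
  set b : ℕ → ℝ := fun i => D / ((n + 1 + i : ℕ) : ℝ) ^ α * S with hb_def
  have hk0 : ∀ i : ℕ, (0 : ℝ) < ((n + 1 + i : ℕ) : ℝ) := by
    intro i; positivity
  have hk1 : ∀ i : ℕ, (1 : ℝ) ≤ ((n + 1 + i : ℕ) : ℝ) := by
    intro i; exact_mod_cast Nat.one_le_iff_ne_zero.mpr (by omega)
  have hka : ∀ i : ℕ, (0 : ℝ) < ((n + 1 + i : ℕ) : ℝ) ^ α :=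
    fun i => Real.rpow_pos_of_pos (hk0 i) α
  have ha_nonneg : ∀ i, 0 ≤ a i := fun i => by positivity
  have hb_nonneg : ∀ i, 0 ≤ b i := fun i => by
    have := (hka i).le
    simp only [hb_def]
    positivity
  -- pointwise bound
  have hpt : ∀ i : ℕ, |x (n + 1 + i) t| ≤ a i + b i := by
    intro i
    exact hx (n + 1 + i) (by omega) t ht
  -- summability of a²
  have ha2 : Summable fun i => a i ^ 2 := by
    have : (fun i => a i ^ 2) = fun i => E ^ 2 * (x (n + 1 + i) 0) ^ 2 := by
      funext i; simp only [ha_def]; rw [mul_pow, sq_abs]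
    rw [this]
    exact h0.mul_left _
  -- summability of b² and the tail bound
  have hbound : ∀ i : ℕ, b i ^ 2 ≤
      D ^ 2 * S ^ 2 * (n : ℝ) ^ ((1 : ℝ) - α) * (1 / ((n : ℝ) + 1 + i) ^ 2) := by
    intro i
    have hkc : ((n + 1 + i : ℕ) : ℝ) = (n : ℝ) + 1 + i := by push_cast; ring
    set k : ℝ := (n : ℝ) + 1 + i with hk_def
    have hk0' : (0 : ℝ) < k := by positivity
    have hk1' : (1 : ℝ) ≤ k := by simp only [hk_def]; linarith [Nat.cast_nonneg (α := ℝ) i]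
    have hnk : (n : ℝ) ≤ k := by simp only [hk_def]; linarith [Nat.cast_nonneg (α := ℝ) i]
    -- key: k^α squared ≥ n^(α-1) * k^2
    have key : (n : ℝ) ^ (α - 1) * k ^ 2 ≤ (k ^ α) ^ 2 := by
      have e1 : (k ^ α) ^ 2 = k ^ (α - 1) * k ^ (α + 1) := by
        rw [← Real.rpow_natCast (k ^ α) 2, ← Real.rpow_mul hk0'.le,
          ← Real.rpow_add hk0']
        norm_num
        ring_nf
      have e2 : (n : ℝ) ^ (α - 1) ≤ k ^ (α - 1) :=
        Real.rpow_le_rpow hn0.le hnk (by linarith)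
      have e3 : k ^ 2 ≤ k ^ (α + 1) := by
        rw [← Real.rpow_natCast k 2]
        apply Real.rpow_le_rpow_of_exponent_le hk1'
        push_cast; linarith
      rw [e1]
      have h4 : (0 : ℝ) ≤ k ^ 2 := by positivity
      have h5 : (0 : ℝ) < k ^ (α - 1) := Real.rpow_pos_of_pos hk0' _
      nlinarith [Real.rpow_pos_of_pos hn0 (α - 1), Real.rpow_pos_of_pos hk0' (α + 1)]
    have hb_eq : b i ^ 2 = D ^ 2 * S ^ 2 * (1 / (k ^ α) ^ 2) := by
      simp only [hb_def, hkc, ← hk_def]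
      field_simp
    rw [hb_eq]
    have hinv : 1 / (k ^ α) ^ 2 ≤ (n : ℝ) ^ ((1 : ℝ) - α) * (1 / k ^ 2) := by
      have hna : (0 : ℝ) < (n : ℝ) ^ (α - 1) := Real.rpow_pos_of_pos hn0 _
      have h1 : 1 / (k ^ α) ^ 2 ≤ 1 / ((n : ℝ) ^ (α - 1) * k ^ 2) := by
        apply one_div_le_one_div_of_le (by positivity) key
      have h2 : 1 / ((n : ℝ) ^ (α - 1) * k ^ 2) = (n : ℝ) ^ ((1 : ℝ) - α) * (1 / k ^ 2) := by
        rw [show (1 : ℝ) - α = -(α - 1) by ring, Real.rpow_neg hn0.le]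
        field_simp
      linarith [h2 ▸ h1]
    calc D ^ 2 * S ^ 2 * (1 / (k ^ α) ^ 2)
        ≤ D ^ 2 * S ^ 2 * ((n : ℝ) ^ ((1 : ℝ) - α) * (1 / k ^ 2)) := by
          apply mul_le_mul_of_nonneg_left hinv (by positivity)
      _ = D ^ 2 * S ^ 2 * (n : ℝ) ^ ((1 : ℝ) - α) * (1 / k ^ 2) := by ring
  have htail : Summable fun i : ℕ => (1 / ((n : ℝ) + 1 + i) ^ 2) := by
    have h1 : Summable fun i : ℕ => (1 / ((i : ℝ) + (n + 1)) ^ 2) := by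
      have := (summable_nat_add_iff (f := fun i : ℕ => 1 / (i : ℝ) ^ 2) (n + 1)).mpr
        (Real.summable_one_div_nat_pow.mpr one_lt_two)
      simpa using this
    apply h1.congr
    intro i; push_cast; ring_nf
  have hb2 : Summable fun i => b i ^ 2 := by
    apply Summable.of_nonneg_of_le (fun i => by positivity) hbound
    exact (htail.mul_left _)
  -- Minkowski
  have h2r : ∀ y : ℝ, y ^ ((2 : ℕ) : ℝ) = y ^ (2 : ℕ) := fun y => Real.rpow_natCast y 2
  have hmink := Real.Lp_add_le_tsum_of_nonneg (f := a) (g := b)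
    (p := ((2 : ℕ) : ℝ)) (by norm_num) ha_nonneg hb_nonneg
    (by simpa only [h2r] using ha2) (by simpa only [h2r] using hb2)
  simp only [h2r] at hmink
  obtain ⟨hab2, hminki⟩ := hmink
  -- summability of x t squared
  have hxle : ∀ i : ℕ, (x (n + 1 + i) t) ^ 2 ≤ (a i + b i) ^ 2 := by
    intro i
    rw [← sq_abs]
    apply pow_le_pow_left₀ (abs_nonneg _) (hpt i)
  have hsummt : Summable fun i : ℕ => (x (n + 1 + i) t) ^ 2 :=
    Summable.of_nonneg_of_le (fun i => sq_nonneg _) hxle hab2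
  refine ⟨hsummt, ?_⟩
  -- now the norm estimate
  have step1 : Real.sqrt (∑' i : ℕ, (x (n + 1 + i) t) ^ 2) ≤
      Real.sqrt (∑' i : ℕ, (a i + b i) ^ 2) :=
    Real.sqrt_le_sqrt (Summable.tsum_le_tsum hxle hsummt hab2)
  have hsq : ∀ c : ℝ, 0 ≤ c → c ^ (1 / ((2 : ℕ) : ℝ)) = Real.sqrt c := by
    intro c hc
    rw [Real.sqrt_eq_rpow]
    norm_num
  have hta : 0 ≤ ∑' i, a i ^ 2 := tsum_nonneg fun i => sq_nonneg _
  have htb : 0 ≤ ∑' i, b i ^ 2 := tsum_nonneg fun i => sq_nonneg _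
  have htab : 0 ≤ ∑' i, (a i + b i) ^ 2 := tsum_nonneg fun i => sq_nonneg _
  rw [hsq _ htab, hsq _ hta, hsq _ htb] at hminki
  -- bound for sqrt of sum a²
  have hA : Real.sqrt (∑' i, a i ^ 2) = E * Real.sqrt (∑' i, (x (n + 1 + i) 0) ^ 2) := by
    have : (fun i => a i ^ 2) = fun i => E ^ 2 * (x (n + 1 + i) 0) ^ 2 := by
      funext i; simp only [ha_def]; rw [mul_pow, sq_abs]
    rw [this, tsum_mul_left, Real.sqrt_mul (by positivity), Real.sqrt_sq hE0.le]
  -- bound for sqrt of sum b²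
  have hB : Real.sqrt (∑' i, b i ^ 2) ≤ Real.pi / Real.sqrt 6 * D * S / Real.sqrt ((n : ℝ) ^ α) := by
    have h1 : (∑' i, b i ^ 2) ≤ D ^ 2 * S ^ 2 * (n : ℝ) ^ ((1 : ℝ) - α) * (1 / n) := by
      calc (∑' i, b i ^ 2)
          ≤ ∑' i : ℕ, D ^ 2 * S ^ 2 * (n : ℝ) ^ ((1 : ℝ) - α) * (1 / ((n : ℝ) + 1 + i) ^ 2) :=
            Summable.tsum_le_tsum hbound hb2 (htail.mul_left _)
        _ = D ^ 2 * S ^ 2 * (n : ℝ) ^ ((1 : ℝ) - α) * ∑' i : ℕ, (1 / ((n : ℝ) + 1 + i) ^ 2) :=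
            tsum_mul_left
        _ ≤ D ^ 2 * S ^ 2 * (n : ℝ) ^ ((1 : ℝ) - α) * (1 / n) := by
            apply mul_le_mul_of_nonneg_left (tail_sum_le n hn)
            positivity
    have h2 : D ^ 2 * S ^ 2 * (n : ℝ) ^ ((1 : ℝ) - α) * (1 / n) = D ^ 2 * S ^ 2 / (n : ℝ) ^ α := by
      rw [show (1 : ℝ) - α = -α + 1 by ring, Real.rpow_add hn0, Real.rpow_one,
        Real.rpow_neg hn0.le]
      field_simp
    have hDS : Real.sqrt (D ^ 2 * S ^ 2 / (n : ℝ) ^ α) = D * S / Real.sqrt ((n : ℝ) ^ α) := by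
      rw [Real.sqrt_div (by positivity) _, show D ^ 2 * S ^ 2 = (D * S) ^ 2 by ring,
        Real.sqrt_sq (by positivity)]
    have hpi : 1 ≤ Real.pi / Real.sqrt 6 := by
      rw [le_div_iff₀ (by positivity)]
      have h6 : Real.sqrt 6 ≤ 3 := by
        nlinarith [Real.sq_sqrt (show (0:ℝ) ≤ 6 by norm_num), Real.sqrt_nonneg 6]
      nlinarith [Real.pi_gt_three]
    calc Real.sqrt (∑' i, b i ^ 2)
        ≤ Real.sqrt (D ^ 2 * S ^ 2 / (n : ℝ) ^ α) := Real.sqrt_le_sqrt (h2 ▸ h1)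
      _ = D * S / Real.sqrt ((n : ℝ) ^ α) := hDS
      _ ≤ Real.pi / Real.sqrt 6 * D * S / Real.sqrt ((n : ℝ) ^ α) := by
          have hs : (0 : ℝ) < Real.sqrt ((n : ℝ) ^ α) :=
            Real.sqrt_pos.mpr (Real.rpow_pos_of_pos hn0 α)
          apply (div_le_div_iff_of_pos_right hs).mpr
          have := le_mul_of_one_le_left (mul_nonneg hD hS) hpi
          linarith [this, (by ring : Real.pi / Real.sqrt 6 * (D * S) = Real.pi / Real.sqrt 6 * D * S)]
  rw [hA] at hminki
  linarith [step1, hminki, hB]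
end

section
/- Let n ≥ 1 be an integer, α > 1 a real number, and c₂, D ≥ 0 constants. Let λ : ℕ → ℝ with λ_k < 0 for all k ≥ n+1 and Σ_{k≥n+1} 1/|λ_k| < ∞, and let (c_k)_{k≥n+1} be reals with |c_k| ≤ c₂. Let S : [0,∞) → [0,∞) and suppose x_k : [0,∞) → ℝ satisfy |x_k(t)| ≤ e^{λ_k t} |x_k(0)| + (D/k^α) S(t) for all k ≥ n+1 and t ≥ 0, with (x_k(0))_{k≥n+1} square-summable. Then for every t > 0 the series Σ_{k≥n+1} |c_k x_k(t)| converges and Σ_{k≥n+1} |c_k x_k(t)| ≤ c₂ η_n(t) ( Σ_{k≥n+1} x_k(0)² )^{1/2} + ( c₂ D ζ(α) / n^{α−1} ) S(t), where η_n(t) = Σ_{k=n+1}^∞ e^{λ_k t} and ζ(α) = Σ_{k=1}^∞ k^{−α}. -/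
open Real

/-- Lemma 4.2 (IOS estimate for the weighted fast modes `z_k = c_k x_k` under
Assumptions (A1) and (A2a)): the ℓ¹-norm of `(z_k)_{k>n}` is bounded by a
transient term involving `η_n(t) = Σ_{k≥n+1} e^{λ_k t}` and an input gain
of order `n^{1-α}` involving `ζ(α) = Σ_{k≥1} k^{-α}`. Indices `k ≥ n+1`
are written as `k = n+1+i` for `i : ℕ`. -/
theorem stmt_9 (n : ℕ) (hn : 1 ≤ n) (α c₂ D : ℝ) (hα : 1 < α) (hc₂ : 0 ≤ c₂) (hD : 0 ≤ D)
    (lam c : ℕ → ℝ) (hlam : ∀ k, n + 1 ≤ k → lam k < 0)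
    (hlamsum : Summable fun i : ℕ => 1 / |lam (n + 1 + i)|)
    (hc : ∀ k, n + 1 ≤ k → |c k| ≤ c₂)
    (S : ℝ → ℝ) (hS : ∀ t, 0 ≤ S t)
    (x : ℕ → ℝ → ℝ)
    (hx : ∀ k, n + 1 ≤ k → ∀ t ≥ (0 : ℝ),
      |x k t| ≤ Real.exp (lam k * t) * |x k 0| + D / (k : ℝ) ^ α * S t)
    (h0 : Summable fun i : ℕ => (x (n + 1 + i) 0) ^ 2) :
    ∀ t > (0 : ℝ), (Summable fun i : ℕ => |c (n + 1 + i) * x (n + 1 + i) t|) ∧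
      ∑' i : ℕ, |c (n + 1 + i) * x (n + 1 + i) t| ≤
        c₂ * (∑' i : ℕ, Real.exp (lam (n + 1 + i) * t)) *
            Real.sqrt (∑' i : ℕ, (x (n + 1 + i) 0) ^ 2) +
          c₂ * D * (∑' i : ℕ, ((i + 1 : ℕ) : ℝ) ^ (-α)) / (n : ℝ) ^ (α - 1) * S t := by
  intro t ht
  have hn' : (0:ℝ) < (n:ℝ) := by exact_mod_cast Nat.lt_of_lt_of_le Nat.zero_lt_one hn
  set B := Real.sqrt (∑' i : ℕ, (x (n + 1 + i) 0) ^ 2) with hBdef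
  have hBnn : 0 ≤ B := Real.sqrt_nonneg _
  have hx0le : ∀ i : ℕ, |x (n+1+i) 0| ≤ B := by
    intro i
    rw [← Real.sqrt_sq_eq_abs]
    exact Real.sqrt_le_sqrt (Summable.le_tsum h0 i fun j _ => sq_nonneg _)
  -- summability of the exponentials
  have hE : Summable (fun i : ℕ => Real.exp (lam (n+1+i) * t)) := by
    apply Summable.of_nonneg_of_le (fun i => (Real.exp_pos _).le) ?_ (hlamsum.mul_left (1/t))
    intro i
    have hl : lam (n+1+i) < 0 := hlam _ (by omega)
    have hu : 0 < -lam (n+1+i) * t := mul_pos (by linarith) ht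
    have h1 : -lam (n+1+i) * t ≤ Real.exp (-lam (n+1+i) * t) := by
      have := Real.add_one_le_exp (-lam (n+1+i) * t); linarith
    have h2 : Real.exp (lam (n+1+i) * t) ≤ 1 / (-lam (n+1+i) * t) := by
      rw [show lam (n+1+i) * t = -(-lam (n+1+i) * t) by ring, Real.exp_neg, ← one_div]
      exact one_div_le_one_div_of_le hu h1
    refine h2.trans_eq ?_
    rw [abs_of_neg hl]
    have hl' : lam (n+1+i) ≠ 0 := ne_of_lt hl
    have ht' : t ≠ 0 := ne_of_gt ht
    field_simp
  -- transient term
  have hEx : Summable (fun i : ℕ => Real.exp (lam (n+1+i) * t) * |x (n+1+i) 0|) := by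
    refine Summable.of_nonneg_of_le (fun i => by positivity)
      (fun i => mul_le_mul_of_nonneg_left (hx0le i) (Real.exp_pos _).le) (hE.mul_right B)
  have hExle : ∑' i : ℕ, Real.exp (lam (n+1+i) * t) * |x (n+1+i) 0| ≤
      (∑' i : ℕ, Real.exp (lam (n+1+i) * t)) * B := by
    rw [← tsum_mul_right]
    exact Summable.tsum_le_tsum (fun i => mul_le_mul_of_nonneg_left (hx0le i) (Real.exp_pos _).le)
      hEx (hE.mul_right B)
  -- zeta
  set g : ℕ → ℝ := fun m => ((m + 1 : ℕ) : ℝ) ^ (-α) with hgdef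
  have hgnn : ∀ m, 0 ≤ g m := fun m => Real.rpow_nonneg (by positivity) _
  have hζ : Summable g := by
    have h := Real.summable_nat_rpow.mpr (show -α < -1 by linarith)
    exact h.comp_injective (add_left_injective 1)
  set ζ := ∑' m : ℕ, g m with hζdef
  have hζnn : 0 ≤ ζ := tsum_nonneg hgnn
  -- sum over the fibered product
  haveI : NeZero n := ⟨by omega⟩
  have hprod : Summable (fun p : ℕ × Fin n => g p.1) := by
    rw [summable_prod_of_nonneg (fun p => hgnn p.1)]
    constructor
    · intro a; exact Summable.of_finite
    · refine (hζ.mul_left (n:ℝ)).congr fun a => ?_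
      simp [tsum_fintype, Finset.sum_const, nsmul_eq_mul]
  have htsumfin : ∀ a : ℕ, ∑' _ : Fin n, g a = (n:ℝ) * g a := by
    intro a; simp [tsum_fintype, Finset.sum_const, nsmul_eq_mul]
  have hprodsum : ∑' p : ℕ × Fin n, g p.1 = (n:ℝ) * ζ := by
    rw [Summable.tsum_prod hprod]
    calc ∑' (a : ℕ) (_ : Fin n), g a = ∑' a : ℕ, (n:ℝ) * g a := by
          exact tsum_congr htsumfin
      _ = (n:ℝ) * ζ := tsum_mul_left
  -- Q i = g (i / n)
  have hQcomp : ∀ p : ℕ × Fin n, g (((Nat.divModEquiv n).symm p) / n) = g p.1 := by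
    intro p
    congr 1
    have h : ((Nat.divModEquiv n).symm p : ℕ) = p.1 * n + (p.2 : ℕ) := rfl
    rw [h, Nat.add_comm, Nat.add_mul_div_right _ _ (Nat.pos_of_ne_zero (NeZero.ne n)),
      Nat.div_eq_of_lt p.2.is_lt, Nat.zero_add]
  have hQ : Summable (fun i : ℕ => g (i / n)) := by
    rw [← (Nat.divModEquiv n).symm.summable_iff]
    exact hprod.congr fun p => (hQcomp p).symm
  have hQsum : ∑' i : ℕ, g (i / n) = (n:ℝ) * ζ := by
    rw [← (Nat.divModEquiv n).symm.tsum_eq]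
    rw [← hprodsum]
    exact tsum_congr hQcomp
  -- pointwise bound on the tail p-series
  have hkey : ∀ i : ℕ, ((n+1+i : ℕ) : ℝ) ^ (-α) ≤ (n:ℝ) ^ (-α) * g (i / n) := by
    intro i
    have h1 : (n * (i/n + 1) : ℕ) ≤ n + 1 + i := by
      have h2 : i / n * n ≤ i := Nat.div_mul_le_self i n
      have : n * (i/n + 1) = i/n * n + n := by ring
      omega
    have h2 : (0:ℝ) < ((n * (i/n+1) : ℕ) : ℝ) := by
      have : 0 < n * (i/n+1) := by positivity
      exact_mod_cast this
    have h3 : ((n * (i/n+1) : ℕ) : ℝ) ≤ ((n+1+i : ℕ) : ℝ) := by exact_mod_cast h1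
    have h4 := Real.rpow_le_rpow_of_nonpos h2 h3 (by linarith : -α ≤ 0)
    refine h4.trans_eq ?_
    have : ((n * (i/n+1) : ℕ) : ℝ) = (n:ℝ) * ((i/n + 1 : ℕ) : ℝ) := by push_cast; ring
    rw [this, Real.mul_rpow hn'.le (by positivity)]
  have hP : Summable (fun i : ℕ => ((n+1+i : ℕ) : ℝ) ^ (-α)) := by
    refine Summable.of_nonneg_of_le (fun i => Real.rpow_nonneg (by positivity) _) hkey
      (hQ.mul_left _)
  have hPle : ∑' i : ℕ, ((n+1+i : ℕ) : ℝ) ^ (-α) ≤ (n:ℝ) ^ (-α) * ((n:ℝ) * ζ) := by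
    calc ∑' i : ℕ, ((n+1+i : ℕ) : ℝ) ^ (-α) ≤ ∑' i : ℕ, (n:ℝ) ^ (-α) * g (i / n) :=
          Summable.tsum_le_tsum hkey hP (hQ.mul_left _)
      _ = (n:ℝ) ^ (-α) * ((n:ℝ) * ζ) := by rw [tsum_mul_left, hQsum]
  -- pointwise bound on the terms
  have hcast : ∀ i : ℕ, ((n+1+i : ℕ) : ℝ) = ((n:ℝ) + 1 + (i:ℝ)) := by intro i; push_cast; ring
  have hFle : ∀ i : ℕ, |c (n+1+i) * x (n+1+i) t| ≤
      c₂ * (Real.exp (lam (n+1+i) * t) * |x (n+1+i) 0|) +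
        (c₂ * D * S t) * ((n+1+i : ℕ) : ℝ) ^ (-α) := by
    intro i
    have hK : n + 1 ≤ n + 1 + i := by omega
    have hKpos : (0:ℝ) < ((n+1+i : ℕ) : ℝ) := by positivity
    calc |c (n+1+i) * x (n+1+i) t| = |c (n+1+i)| * |x (n+1+i) t| := abs_mul _ _
      _ ≤ c₂ * |x (n+1+i) t| := mul_le_mul_of_nonneg_right (hc _ hK) (abs_nonneg _)
      _ ≤ c₂ * (Real.exp (lam (n+1+i) * t) * |x (n+1+i) 0| +
            D / ((n+1+i : ℕ) : ℝ) ^ α * S t) := by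
          exact mul_le_mul_of_nonneg_left (by exact_mod_cast hx _ hK t ht.le) hc₂
      _ = c₂ * (Real.exp (lam (n+1+i) * t) * |x (n+1+i) 0|) +
            (c₂ * D * S t) * ((n+1+i : ℕ) : ℝ) ^ (-α) := by
          rw [Real.rpow_neg hKpos.le]; ring
  have hRHS : Summable (fun i : ℕ => c₂ * (Real.exp (lam (n+1+i) * t) * |x (n+1+i) 0|) +
      (c₂ * D * S t) * ((n+1+i : ℕ) : ℝ) ^ (-α)) :=
    (hEx.mul_left c₂).add (hP.mul_left _)
  have hSummable : Summable (fun i : ℕ => |c (n+1+i) * x (n+1+i) t|) :=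
    Summable.of_nonneg_of_le (fun i => abs_nonneg _) hFle hRHS
  refine ⟨hSummable, ?_⟩
  have main : ∑' i : ℕ, |c (n+1+i) * x (n+1+i) t| ≤
      c₂ * ((∑' i : ℕ, Real.exp (lam (n+1+i) * t)) * B) +
        (c₂ * D * S t) * ((n:ℝ) ^ (-α) * ((n:ℝ) * ζ)) := by
    calc ∑' i : ℕ, |c (n+1+i) * x (n+1+i) t|
        ≤ ∑' i : ℕ, (c₂ * (Real.exp (lam (n+1+i) * t) * |x (n+1+i) 0|) +
            (c₂ * D * S t) * ((n+1+i : ℕ) : ℝ) ^ (-α)) :=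
          Summable.tsum_le_tsum hFle hSummable hRHS
      _ = c₂ * (∑' i : ℕ, Real.exp (lam (n+1+i) * t) * |x (n+1+i) 0|) +
            (c₂ * D * S t) * ∑' i : ℕ, ((n+1+i : ℕ) : ℝ) ^ (-α) := by
          rw [Summable.tsum_add (hEx.mul_left c₂) (hP.mul_left _), tsum_mul_left, tsum_mul_left]
      _ ≤ c₂ * ((∑' i : ℕ, Real.exp (lam (n+1+i) * t)) * B) +
            (c₂ * D * S t) * ((n:ℝ) ^ (-α) * ((n:ℝ) * ζ)) := by
          exact add_le_add (mul_le_mul_of_nonneg_left hExle hc₂)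
            (mul_le_mul_of_nonneg_left hPle (mul_nonneg (mul_nonneg hc₂ hD) (hS t)))
  refine main.trans_eq ?_
  have hpow : (n:ℝ) ^ (-α) * (n:ℝ) = ((n:ℝ) ^ (α - 1))⁻¹ := by
    calc (n:ℝ) ^ (-α) * (n:ℝ) = (n:ℝ) ^ (-α) * (n:ℝ) ^ (1:ℝ) := by rw [Real.rpow_one]
      _ = (n:ℝ) ^ (-α + 1) := (Real.rpow_add hn' _ _).symm
      _ = (n:ℝ) ^ (-(α - 1)) := by congr 1; ring
      _ = ((n:ℝ) ^ (α - 1))⁻¹ := Real.rpow_neg hn'.le _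
  rw [show (n:ℝ) ^ (-α) * ((n:ℝ) * ζ) = ζ * ((n:ℝ) ^ (α - 1))⁻¹ by
    rw [← mul_assoc, hpow]; ring]
  ring
end

section
/- Let s ≥ 1 and let a : {1,…,s} → ℝ be not identically zero and p : {1,…,s} → ℝ be pairwise distinct with p_i < 0 for all i. Define h(τ) = Σ_{i=1}^s a_i e^{p_i τ} and H(u) = ∫₀^u h(τ) dτ. Then sup_{u ≥ 0} |H(u)| is finite and for every t ≥ 0: ∫₀^t |h(τ)| dτ ≤ 2 s · sup_{u ≥ 0} |H(u)|. -/
open Real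

/-- Descartes' rule for exponential sums: an exponential sum with `s` terms
cannot vanish at `s` strictly increasing points (unless all coefficients vanish). -/
lemma expsum_not_all_zero :
    ∀ (s : ℕ) (a p : Fin s → ℝ), Function.Injective p → (∃ i, a i ≠ 0) →
    ∀ x : Fin s → ℝ, StrictMono x →
    ∃ i, (∑ j, a j * Real.exp (p j * x i)) ≠ 0 := by
  intro s
  induction s with
  | zero => rintro a p _ ⟨i, _⟩ _ _; exact absurd i.2 (by omega)
  | succ s IH =>
    intro a p hpinj ha x hx
    by_contra hcon
    push_neg at hcon
    by_cases hall : ∀ j, a j ≠ 0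
    · rcases Nat.eq_zero_or_pos s with hs0 | hs1
      · subst hs0
        have h0 := hcon 0
        simp [Fin.sum_univ_one] at h0
        exact hall 0 h0
      · -- all coefficients nonzero, s ≥ 1
        set q : Fin (s+1) → ℝ := fun j => p j - p 0 with hq
        set g : ℝ → ℝ := fun y => ∑ j, a j * Real.exp (q j * y) with hg
        set b : Fin s → ℝ := fun j => a j.succ * (p j.succ - p 0) with hb
        set r : Fin s → ℝ := fun j => p j.succ - p 0 with hr
        have hderiv : ∀ y : ℝ, HasDerivAt g (∑ j : Fin s, b j * Real.exp (r j * y)) y := by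
          intro y
          have h1 : HasDerivAt g (∑ j : Fin (s+1), a j * (Real.exp (q j * y) * q j)) y := by
            apply HasDerivAt.fun_sum
            intro j _
            have : HasDerivAt (fun z : ℝ => q j * z) (q j) y := by
              simpa using (hasDerivAt_id y).const_mul (q j)
            exact (this.exp).const_mul (a j)
          convert h1 using 1
          rw [Fin.sum_univ_succ]
          have : a 0 * (Real.exp (q 0 * y) * q 0) = 0 := by simp [hq]
          rw [this, zero_add]
          apply Finset.sum_congr rfl
          intro j _
          simp only [hb, hr, hq]
          ring
        have hgz : ∀ i, g (x i) = 0 := by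
          intro i
          have : g (x i) = (∑ j, a j * Real.exp (p j * x i)) * Real.exp (-(p 0) * x i) := by
            rw [hg, Finset.sum_mul]
            apply Finset.sum_congr rfl
            intro j _
            rw [mul_assoc, ← Real.exp_add]
            simp only [hq]; ring_nf
          rw [this, hcon i, zero_mul]
        have hrolle : ∀ i : Fin s, ∃ c ∈ Set.Ioo (x i.castSucc) (x i.succ),
            (∑ j : Fin s, b j * Real.exp (r j * c)) = 0 := by
          intro i
          have hgc : Continuous g := by
            apply continuous_finset_sum
            intro j _
            exact continuous_const.mul (Real.continuous_exp.comp (continuous_const.mul continuous_id))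
          exact exists_hasDerivAt_eq_zero (f := g) (hx (Fin.castSucc_lt_succ (i := i)))
            hgc.continuousOn (by rw [hgz, hgz]) (fun z _ => hderiv z)
        choose y hy1 hy2 using hrolle
        have hymono : StrictMono y := by
          intro i j hij
          have h1 : y i < x i.succ := (hy1 i).2
          have h3 : x j.castSucc < y j := (hy1 j).1
          have h2 : x i.succ ≤ x j.castSucc := by
            apply hx.monotone
            rw [Fin.le_def]
            simp only [Fin.val_succ, Fin.coe_castSucc]
            exact hij
          linarith
        have hbne : ∃ j, b j ≠ 0 := by
          refine ⟨⟨0, hs1⟩, ?_⟩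
          apply mul_ne_zero (hall _)
          rw [sub_ne_zero]
          exact fun hc => Fin.succ_ne_zero _ (hpinj hc)
        have hrinj : Function.Injective r := by
          intro i j hij
          simp only [hr] at hij
          have : p i.succ = p j.succ := by linarith
          exact Fin.succ_injective _ (hpinj this)
        obtain ⟨i, hi⟩ := IH b r hrinj hbne y hymono
        exact hi (hy2 i)
    · push_neg at hall
      obtain ⟨i, hai⟩ := hall
      have hinj' : Function.Injective (p ∘ i.succAbove) :=
        hpinj.comp (Fin.succAbove_right_injective)
      have ha' : ∃ j, (a ∘ i.succAbove) j ≠ 0 := by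
        obtain ⟨k, hk⟩ := ha
        have hki : k ≠ i := fun hc => hk (hc ▸ hai)
        obtain ⟨j, hj⟩ := Fin.exists_succAbove_eq hki
        exact ⟨j, by simpa [hj] using hk⟩
      have hxm : StrictMono (x ∘ Fin.castSucc) := by
        intro u v huv
        exact hx (by simpa using huv)
      obtain ⟨j, hj⟩ := IH (a ∘ i.succAbove) (p ∘ i.succAbove) hinj' ha' (x ∘ Fin.castSucc) hxm
      apply hj
      have := hcon (Fin.castSucc j)
      rw [Fin.sum_univ_succAbove _ i] at this
      simpa [hai] using this

/-- If a continuous function has no zero on `(a,b)`, the integral of its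
absolute value equals the absolute value of its integral. -/
lemma abs_integral_of_no_zero (h : ℝ → ℝ) (hc : Continuous h) {a b : ℝ} (hab : a ≤ b)
    (hz : ∀ x ∈ Set.Ioo a b, h x ≠ 0) :
    (∫ τ in a..b, |h τ|) = |∫ τ in a..b, h τ| := by
  rcases eq_or_lt_of_le hab with rfl | hlt
  · simp
  have hsign : (∀ x ∈ Set.Icc a b, 0 ≤ h x) ∨ (∀ x ∈ Set.Icc a b, h x ≤ 0) := by
    by_contra hcon
    push_neg at hcon
    obtain ⟨⟨u, hu, hupos⟩, ⟨v, hv, hvneg⟩⟩ := hcon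
    -- h u < 0 and 0 < h v
    rcases lt_trichotomy u v with huv | rfl | hvu
    · have : (0:ℝ) ∈ Set.Ioo (h u) (h v) := ⟨hupos, hvneg⟩
      obtain ⟨c, hc1, hc2⟩ := intermediate_value_Ioo (le_of_lt huv) hc.continuousOn this
      exact hz c ⟨lt_of_le_of_lt hu.1 hc1.1, lt_of_lt_of_le hc1.2 hv.2⟩ hc2
    · linarith
    · have : (0:ℝ) ∈ Set.Ioo (h u) (h v) := ⟨hupos, hvneg⟩
      obtain ⟨c, hc1, hc2⟩ := intermediate_value_Ioo' (le_of_lt hvu) hc.continuousOn this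
      exact hz c ⟨lt_of_le_of_lt hv.1 hc1.1, lt_of_lt_of_le hc1.2 hu.2⟩ hc2
  rcases hsign with hpos | hneg
  · have he : Set.EqOn (fun τ => |h τ|) h (Set.uIcc a b) := by
      intro x hx
      rw [Set.uIcc_of_le hab] at hx
      exact abs_of_nonneg (hpos x hx)
    rw [intervalIntegral.integral_congr he,
      abs_of_nonneg (intervalIntegral.integral_nonneg hab hpos)]
  · have he : Set.EqOn (fun τ => |h τ|) (fun τ => -h τ) (Set.uIcc a b) := by
      intro x hx
      rw [Set.uIcc_of_le hab] at hx
      exact abs_of_nonpos (hneg x hx)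
    rw [intervalIntegral.integral_congr he, intervalIntegral.integral_neg]
    rw [abs_of_nonpos]
    have : 0 ≤ ∫ τ in a..b, -h τ := by
      apply intervalIntegral.integral_nonneg hab
      intro u hu; simpa using hneg u hu
    rw [intervalIntegral.integral_neg] at this
    linarith

lemma integral_abs_piece (h : ℝ → ℝ) (hc : Continuous h) (M : ℝ)
    (hM : ∀ u v : ℝ, 0 ≤ u → 0 ≤ v → |∫ τ in u..v, h τ| ≤ 2 * M)
    {a b : ℝ} (ha : 0 ≤ a) (hab : a ≤ b)
    (hz : ∀ x ∈ Set.Ioo a b, h x ≠ 0) :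
    (∫ τ in a..b, |h τ|) ≤ 2 * M := by
  rw [abs_integral_of_no_zero h hc hab hz]
  exact hM a b ha (le_trans ha hab)

lemma integral_abs_le_of_zeros (h : ℝ → ℝ) (hc : Continuous h) (M : ℝ)
    (hM : ∀ u v : ℝ, 0 ≤ u → 0 ≤ v → |∫ τ in u..v, h τ| ≤ 2 * M) :
    ∀ n : ℕ, ∀ a b : ℝ, 0 ≤ a → a ≤ b →
      {τ ∈ Set.Ioo a b | h τ = 0}.Finite →
      {τ ∈ Set.Ioo a b | h τ = 0}.ncard ≤ n →
      (∫ τ in a..b, |h τ|) ≤ 2 * ((n + 1 : ℕ) : ℝ) * M := by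
  have hM0 : 0 ≤ M := by
    have := hM 0 0 le_rfl le_rfl
    simp at this; linarith
  intro n
  induction n with
  | zero =>
    intro a b ha hab hfin hcard
    have hempty : {τ ∈ Set.Ioo a b | h τ = 0} = ∅ := by
      rw [← Set.ncard_eq_zero hfin]; omega
    have hz : ∀ x ∈ Set.Ioo a b, h x ≠ 0 := by
      intro x hx hx0
      have : x ∈ ({τ ∈ Set.Ioo a b | h τ = 0} : Set ℝ) := ⟨hx, hx0⟩
      rw [hempty] at this; exact this
    calc (∫ τ in a..b, |h τ|) ≤ 2 * M := integral_abs_piece h hc M hM ha hab hz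
      _ ≤ 2 * ((0 + 1 : ℕ) : ℝ) * M := by norm_num
  | succ n IH =>
    intro a b ha hab hfin hcard
    rcases Set.eq_empty_or_nonempty {τ ∈ Set.Ioo a b | h τ = 0} with hempty | hne
    · have hz : ∀ x ∈ Set.Ioo a b, h x ≠ 0 := by
        intro x hx hx0
        have : x ∈ ({τ ∈ Set.Ioo a b | h τ = 0} : Set ℝ) := ⟨hx, hx0⟩
        rw [hempty] at this; exact this
      calc (∫ τ in a..b, |h τ|) ≤ 2 * M := integral_abs_piece h hc M hM ha hab hz
        _ ≤ 2 * ((n + 1 + 1 : ℕ) : ℝ) * M := by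
            have : (1:ℝ) ≤ ((n + 1 + 1 : ℕ) : ℝ) := by exact_mod_cast Nat.le_add_left 1 (n+1)
            nlinarith
    · set Z := {τ ∈ Set.Ioo a b | h τ = 0} with hZ
      have hFne : hfin.toFinset.Nonempty := (Set.Finite.toFinset_nonempty hfin).2 hne
      set z := hfin.toFinset.max' hFne with hzdef
      have hzZ : z ∈ Z := by
        have := hfin.toFinset.max'_mem hFne
        rwa [Set.Finite.mem_toFinset] at this
      have hzmax : ∀ w ∈ Z, w ≤ z := by
        intro w hw
        exact hfin.toFinset.le_max' w ((Set.Finite.mem_toFinset hfin).2 hw)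
      obtain ⟨⟨haz, hzb⟩, hhz⟩ := hzZ
      have hint : IntervalIntegrable (fun τ => |h τ|) MeasureTheory.volume a z ∧
          IntervalIntegrable (fun τ => |h τ|) MeasureTheory.volume z b :=
        ⟨(hc.abs).intervalIntegrable _ _, (hc.abs).intervalIntegrable _ _⟩
      rw [← intervalIntegral.integral_add_adjacent_intervals hint.1 hint.2]
      have hleft : (∫ τ in a..z, |h τ|) ≤ 2 * ((n + 1 : ℕ) : ℝ) * M := by
        apply IH a z ha (le_of_lt haz)
        · apply hfin.subset
          rintro τ ⟨⟨h1, h2⟩, h3⟩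
          exact ⟨⟨h1, lt_trans h2 hzb⟩, h3⟩
        · have hsub : {τ ∈ Set.Ioo a z | h τ = 0} ⊆ Z \ {z} := by
            rintro τ ⟨⟨h1, h2⟩, h3⟩
            exact ⟨⟨⟨h1, lt_trans h2 hzb⟩, h3⟩, ne_of_lt h2⟩
          have h1 : {τ ∈ Set.Ioo a z | h τ = 0}.ncard ≤ (Z \ {z}).ncard :=
            Set.ncard_le_ncard hsub hfin.diff
          have h2 : (Z \ {z}).ncard = Z.ncard - 1 :=
            Set.ncard_diff_singleton_of_mem ⟨⟨haz, hzb⟩, hhz⟩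
          omega
      have hright : (∫ τ in z..b, |h τ|) ≤ 2 * M := by
        apply integral_abs_piece h hc M hM (le_trans ha (le_of_lt haz)) (le_of_lt hzb)
        intro w hw hw0
        have : w ∈ Z := ⟨⟨lt_trans haz hw.1, hw.2⟩, hw0⟩
        exact absurd (hzmax w this) (not_le.2 hw.1)
      calc (∫ τ in a..z, |h τ|) + ∫ τ in z..b, |h τ|
          ≤ 2 * ((n + 1 : ℕ) : ℝ) * M + 2 * M := add_le_add hleft hright
        _ = 2 * ((n + 1 + 1 : ℕ) : ℝ) * M := by push_cast; ring


/-- Key step in the proof of Lemma 4.3: for an exponential sum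
`h(τ) = Σ_{i=1}^s a_i e^{p_i τ}` with negative pairwise distinct exponents,
the primitive `H(u) = ∫₀^u h` is bounded on `[0,∞)` and
`∫₀^t |h(τ)| dτ ≤ 2 s sup_{u≥0} |H(u)|`. -/
theorem stmt_10 (s : ℕ) (hs : 1 ≤ s) (a p : Fin s → ℝ) (ha : ∃ i, a i ≠ 0)
    (hp_inj : Function.Injective p) (hp : ∀ i, p i < 0)
    (h H : ℝ → ℝ)
    (hh : ∀ τ, h τ = ∑ i : Fin s, a i * Real.exp (p i * τ))
    (hH : ∀ u, H u = ∫ τ in (0:ℝ)..u, h τ) :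
    BddAbove ((fun u => |H u|) '' Set.Ici (0:ℝ)) ∧
      ∀ t ≥ (0 : ℝ), (∫ τ in (0:ℝ)..t, |h τ|) ≤
        2 * s * sSup ((fun u => |H u|) '' Set.Ici (0:ℝ)) := by
  have hc : Continuous h := by
    have : h = fun τ => ∑ i : Fin s, a i * Real.exp (p i * τ) := funext hh
    rw [this]
    exact continuous_finset_sum _ fun i _ =>
      continuous_const.mul (Real.continuous_exp.comp (continuous_const.mul continuous_id))
  -- explicit primitive
  set F : ℝ → ℝ := fun u => ∑ i : Fin s, a i / p i * (Real.exp (p i * u) - 1) with hF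
  have hFderiv : ∀ u : ℝ, HasDerivAt F (h u) u := by
    intro u
    have h1 : HasDerivAt F (∑ i : Fin s, a i / p i * (Real.exp (p i * u) * p i)) u := by
      apply HasDerivAt.fun_sum
      intro i _
      have hlin : HasDerivAt (fun z : ℝ => p i * z) (p i) u := by
        simpa using (hasDerivAt_id u).const_mul (p i)
      simpa using ((hlin.exp).sub_const 1).const_mul (a i / p i)
    convert h1 using 1
    rw [hh]
    apply Finset.sum_congr rfl
    intro i _
    have hne : p i ≠ 0 := ne_of_lt (hp i)
    field_simp
  have hHeq : ∀ u, H u = F u := by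
    intro u
    rw [hH]
    have := intervalIntegral.integral_eq_sub_of_hasDerivAt
      (f := F) (f' := h) (a := (0:ℝ)) (b := u)
      (fun x _ => hFderiv x) (hc.intervalIntegrable 0 u)
    rw [this]
    simp [hF]
  -- boundedness
  set C : ℝ := ∑ i : Fin s, |a i / p i| with hC
  have hbound : ∀ u : ℝ, 0 ≤ u → |H u| ≤ C := by
    intro u hu
    rw [hHeq]
    calc |F u| ≤ ∑ i : Fin s, |a i / p i * (Real.exp (p i * u) - 1)| :=
          Finset.abs_sum_le_sum_abs _ _
      _ ≤ C := by
          apply Finset.sum_le_sum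
          intro i _
          rw [abs_mul]
          have hexp : |Real.exp (p i * u) - 1| ≤ 1 := by
            have h1 : Real.exp (p i * u) ≤ 1 :=
              Real.exp_le_one_iff.2 (mul_nonpos_of_nonpos_of_nonneg (le_of_lt (hp i)) hu)
            have h2 : 0 < Real.exp (p i * u) := Real.exp_pos _
            rw [abs_le]; constructor <;> linarith
          nlinarith [abs_nonneg (a i / p i)]
  set S : Set ℝ := (fun u => |H u|) '' Set.Ici (0:ℝ) with hSdef
  have hbdd : BddAbove S := by
    refine ⟨C, ?_⟩
    rintro y ⟨u, hu, rfl⟩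
    exact hbound u hu
  refine ⟨hbdd, ?_⟩
  set M : ℝ := sSup S with hM
  have hMle : ∀ u : ℝ, 0 ≤ u → |H u| ≤ M := by
    intro u hu
    exact le_csSup hbdd ⟨u, hu, rfl⟩
  have hM2 : ∀ u v : ℝ, 0 ≤ u → 0 ≤ v → |∫ τ in u..v, h τ| ≤ 2 * M := by
    intro u v hu hv
    have heq : (∫ τ in u..v, h τ) = H v - H u := by
      rw [hH, hH]
      exact (intervalIntegral.integral_interval_sub_left
        (hc.intervalIntegrable 0 v) (hc.intervalIntegrable 0 u)).symm
    rw [heq]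
    have := hMle u hu
    have := hMle v hv
    have := abs_sub (H v) (H u)
    calc |H v - H u| ≤ |H v| + |H u| := abs_sub _ _
      _ ≤ 2 * M := by linarith [hMle u hu, hMle v hv]
  intro t ht
  -- zero counting
  have hnofin : ∀ T : Finset ℝ, (∀ τ ∈ T, h τ = 0) → T.card ≠ s := by
    intro T hT hcard
    set e := T.orderIsoOfFin hcard with he
    set x : Fin s → ℝ := fun i => ((e i : T) : ℝ) with hx
    have hxm : StrictMono x := fun i j hij => by
      exact_mod_cast e.strictMono hij
    obtain ⟨i, hi⟩ := expsum_not_all_zero s a p hp_inj ha x hxm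
    apply hi
    rw [← hh]
    exact hT _ (e i).2
  have hnolarge : ∀ T : Finset ℝ, (∀ τ ∈ T, h τ = 0) → T.card < s := by
    intro T hT
    by_contra hle
    push_neg at hle
    obtain ⟨T', hT'sub, hT'card⟩ := T.exists_subset_card_eq hle
    exact hnofin T' (fun τ hτ => hT τ (hT'sub hτ)) hT'card
  have hfin : {τ ∈ Set.Ioo (0:ℝ) t | h τ = 0}.Finite := by
    by_contra hinf
    have hinf' : {τ ∈ Set.Ioo (0:ℝ) t | h τ = 0}.Infinite := hinf
    obtain ⟨T, hTsub, hTcard⟩ := hinf'.exists_subset_card_eq s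
    exact hnofin T (fun τ hτ => (hTsub hτ).2) hTcard
  have hcard : {τ ∈ Set.Ioo (0:ℝ) t | h τ = 0}.ncard < s := by
    have := hnolarge hfin.toFinset (fun τ hτ => ((Set.Finite.mem_toFinset hfin).1 hτ).2)
    rwa [Set.ncard_eq_toFinset_card _ hfin]
  have hmain := integral_abs_le_of_zeros h hc M hM2 (s - 1) 0 t le_rfl ht hfin (by omega)
  have hseq : s - 1 + 1 = s := Nat.succ_pred_eq_of_pos hs
  rw [hseq] at hmain
  exact hmain
end

section
/- Let n, s, k₁ be positive integers and c₁, c₂, c₃, c₄, c₅, γ > 0 constants. Let λ, b, c : ℕ → ℝ satisfy, for all k ≥ n: λ_k ≤ −c₃ k², |b_k| ≤ c₁ k, |c_k| ≤ c₂, the values (λ_k)_{k≥n} are pairwise distinct, and |1/λ_k − 1/λ_{k'}| ≤ γ k^{−3} whenever n ≤ k ≤ k' ≤ k + k₁. For each j ∈ ℕ let S_j ⊂ ℕ be a finite set with at most s elements such that min S_j ≥ c₄ j, max S_j ≤ min S_j + k₁, and |Σ_{k∈S_j} (c_k b_k / λ_k)| ≤ c₅ j^{−2}. Then there exists a constant C₃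 > 0 such that for all t ≥ 0 and all j ∈ ℕ with c₄ j ≥ n: ∫₀^t | Σ_{k∈S_j} c_k b_k e^{λ_k τ} | dτ ≤ C₃ / j². -/
open Real

private lemma cexp_cont (x : ℝ) : Continuous fun τ : ℝ => Real.exp (x*τ) :=
  Real.continuous_exp.comp (continuous_const.mul continuous_id)

private lemma int_exp (lam t : ℝ) (h : lam ≠ 0) :
    ∫ τ in (0:ℝ)..t, Real.exp (lam * τ) = (Real.exp (lam*t) - 1)/lam := by
  have := intervalIntegral.integral_comp_mul_left (a := (0:ℝ)) (b := t) (c := lam) (f := Real.exp) h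
  rw [this]
  simp [integral_exp, Real.exp_zero, smul_eq_mul]
  field_simp

private lemma L1 (lam t : ℝ) (hl : lam < 0) (ht : 0 ≤ t) :
    ∫ τ in (0:ℝ)..t, (-lam) * Real.exp (lam * τ) ≤ 1 := by
  rw [intervalIntegral.integral_const_mul, int_exp lam t hl.ne]
  have hA : Real.exp (lam * t) ≤ 1 := Real.exp_le_one_iff.mpr (by nlinarith)
  have hA0 : 0 < Real.exp (lam * t) := Real.exp_pos _
  have hl0 : lam ≠ 0 := hl.ne
  have : -lam * ((Real.exp (lam*t) - 1)/lam) = 1 - Real.exp (lam*t) := by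
    field_simp; ring
  linarith [this]

private lemma L2 (lam mu t : ℝ) (hlm : lam ≤ mu) (hm : mu < 0) (ht : 0 ≤ t) :
    ∫ τ in (0:ℝ)..t, |lam * Real.exp (lam*τ) - mu * Real.exp (mu*τ)|
      ≤ 2*(-mu)*(1/lam - 1/mu) := by
  have hl : lam < 0 := lt_of_le_of_lt hlm hm
  have hl0 : lam ≠ 0 := hl.ne
  have hm0 : mu ≠ 0 := hm.ne
  set g : ℝ → ℝ := fun τ => (-mu)*(Real.exp (mu*τ) - Real.exp (lam*τ)) + (mu-lam)*Real.exp (lam*τ) with hg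
  have hint1 : IntervalIntegrable (fun τ => |lam * Real.exp (lam*τ) - mu * Real.exp (mu*τ)|) MeasureTheory.volume 0 t :=
    (((continuous_const.mul (cexp_cont lam)).sub (continuous_const.mul (cexp_cont mu))).abs).intervalIntegrable _ _
  have hint2 : IntervalIntegrable g MeasureTheory.volume 0 t :=
    ((continuous_const.mul ((cexp_cont mu).sub (cexp_cont lam))).add (continuous_const.mul (cexp_cont lam))).intervalIntegrable _ _
  have h1 : (∫ τ in (0:ℝ)..t, |lam * Real.exp (lam*τ) - mu * Real.exp (mu*τ)|) ≤ ∫ τ in (0:ℝ)..t, g τ := by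
    apply intervalIntegral.integral_mono_on ht hint1 hint2
    intro τ hτ
    have hτ0 : 0 ≤ τ := hτ.1
    have h2 : Real.exp (lam*τ) ≤ Real.exp (mu*τ) := Real.exp_le_exp.mpr (by nlinarith)
    have h3 : (0:ℝ) < Real.exp (lam*τ) := Real.exp_pos _
    calc |lam * Real.exp (lam*τ) - mu * Real.exp (mu*τ)|
        = |mu*(Real.exp (lam*τ) - Real.exp (mu*τ)) + (lam-mu)*Real.exp (lam*τ)| := by ring_nf
      _ ≤ |mu*(Real.exp (lam*τ) - Real.exp (mu*τ))| + |(lam-mu)*Real.exp (lam*τ)| := abs_add_le _ _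
      _ = g τ := by
          rw [abs_mul, abs_mul, abs_of_nonpos hm.le, abs_of_nonpos (by linarith : lam - mu ≤ 0),
            abs_of_nonpos (by linarith : Real.exp (lam*τ) - Real.exp (mu*τ) ≤ 0),
            abs_of_pos h3, hg]
          ring
  have h4 : (∫ τ in (0:ℝ)..t, g τ)
      = (-mu)*((Real.exp (mu*t) - 1)/mu - (Real.exp (lam*t) - 1)/lam) + (mu-lam)*((Real.exp (lam*t) - 1)/lam) := by
    rw [hg]
    rw [intervalIntegral.integral_add (f := fun τ => (-mu)*(Real.exp (mu*τ) - Real.exp (lam*τ)))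
        (g := fun τ => (mu-lam)*Real.exp (lam*τ))
        (((continuous_const.mul ((cexp_cont mu).sub (cexp_cont lam)))).intervalIntegrable _ _)
        ((continuous_const.mul (cexp_cont lam)).intervalIntegrable _ _),
      intervalIntegral.integral_const_mul, intervalIntegral.integral_const_mul,
      intervalIntegral.integral_sub ((cexp_cont mu).intervalIntegrable _ _) ((cexp_cont lam).intervalIntegrable _ _),
      int_exp lam t hl0, int_exp mu t hm0]
  set A := Real.exp (lam*t) with hA'
  set B := Real.exp (mu*t) with hB'
  have hA : A ≤ 1 := Real.exp_le_one_iff.mpr (by nlinarith)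
  have hAB : A ≤ B := Real.exp_le_exp.mpr (by nlinarith)
  have hA0 : (0:ℝ) < A := Real.exp_pos _
  have hkey : B*lam - A*mu ≤ 0 := by nlinarith
  have hT1 : (B-1)/mu - (A-1)/lam ≤ 1/lam - 1/mu := by
    have e1 : (B-1)/mu - (A-1)/lam - (1/lam - 1/mu) = (B*lam - A*mu)/(mu*lam) := by
      field_simp
      ring
    have e2 : (B*lam - A*mu)/(mu*lam) ≤ 0 :=
      div_nonpos_of_nonpos_of_nonneg hkey (le_of_lt (mul_pos_of_neg_of_neg hm hl))
    linarith
  have hT2 : (A-1)/lam ≤ 1/(-lam) := by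
    have e1 : (A-1)/lam = (1-A)/(-lam) := by
      rw [div_eq_div_iff hl0 (neg_ne_zero.mpr hl0)]; ring
    rw [e1]
    exact (div_le_div_iff_of_pos_right (by linarith : (0:ℝ) < -lam)).mpr (by linarith)
  have hfin : (-mu)*((B - 1)/mu - (A - 1)/lam) + (mu-lam)*((A - 1)/lam)
      ≤ 2*(-mu)*(1/lam - 1/mu) := by
    have e3 : (mu-lam)*(1/(-lam)) = (-mu)*(1/lam - 1/mu) := by
      rw [mul_one_div, div_sub_div _ _ hl0 hm0, mul_div_assoc',
        div_eq_div_iff (neg_ne_zero.mpr hl0) (mul_ne_zero hl0 hm0)]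
      ring
    have s1 : (-mu)*((B - 1)/mu - (A - 1)/lam) ≤ (-mu)*(1/lam - 1/mu) :=
      mul_le_mul_of_nonneg_left hT1 (by linarith)
    have s2 : (mu-lam)*((A - 1)/lam) ≤ (mu-lam)*(1/(-lam)) :=
      mul_le_mul_of_nonneg_left hT2 (by linarith)
    linarith
  linarith [h1, h4.le, h4.ge, hfin]

private lemma L2' (lam mu t : ℝ) (hl : lam < 0) (hm : mu < 0) (ht : 0 ≤ t) :
    ∫ τ in (0:ℝ)..t, |lam * Real.exp (lam*τ) - mu * Real.exp (mu*τ)|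
      ≤ 2*(-lam)*|1/lam - 1/mu| := by
  rcases le_total lam mu with hlm | hml
  · have h1 := L2 lam mu t hlm hm ht
    have h2 : (0:ℝ) ≤ 1/lam - 1/mu := by
      have : 1/lam - 1/mu = (mu - lam)/(lam*mu) := by
        rw [div_sub_div _ _ hl.ne hm.ne, div_eq_div_iff (mul_ne_zero hl.ne hm.ne) (mul_ne_zero hl.ne hm.ne)]
        ring
      rw [this]
      exact div_nonneg (by linarith) (le_of_lt (mul_pos_of_neg_of_neg hl hm))
    rw [abs_of_nonneg h2]
    have : 2*(-mu)*(1/lam - 1/mu) ≤ 2*(-lam)*(1/lam - 1/mu) := by nlinarith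
    linarith
  · have h1 := L2 mu lam t hml hl ht
    have h2 : (0:ℝ) ≤ 1/mu - 1/lam := by
      have : 1/mu - 1/lam = (lam - mu)/(mu*lam) := by
        rw [div_sub_div _ _ hm.ne hl.ne, div_eq_div_iff (mul_ne_zero hm.ne hl.ne) (mul_ne_zero hm.ne hl.ne)]
        ring
      rw [this]
      exact div_nonneg (by linarith) (le_of_lt (mul_pos_of_neg_of_neg hm hl))
    have habs : |1/lam - 1/mu| = 1/mu - 1/lam := by
      rw [abs_sub_comm, abs_of_nonneg h2]
    rw [habs]
    simp only [abs_sub_comm (lam * _)]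
    linarith

/-- Lemma 4.3 of the paper: the auxiliary integral estimate under Assumption (A2b).
Grouping the modes into small clusters `S_j` whose weighted sums almost cancel
yields an integrable kernel with gain of order `j^{-2}`. -/
theorem stmt_11 (n s k₁ : ℕ) (hn : 1 ≤ n) (hs : 1 ≤ s) (hk₁ : 1 ≤ k₁)
    (c₁ c₂ c₃ c₄ c₅ γ : ℝ)
    (hc₁ : 0 < c₁) (hc₂ : 0 < c₂) (hc₃ : 0 < c₃) (hc₄ : 0 < c₄) (hc₅ : 0 < c₅) (hγ : 0 < γ)
    (lam b c : ℕ → ℝ)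
    (hlam : ∀ k, n ≤ k → lam k ≤ -c₃ * (k : ℝ) ^ 2)
    (hb : ∀ k, n ≤ k → |b k| ≤ c₁ * (k : ℝ))
    (hc : ∀ k, n ≤ k → |c k| ≤ c₂)
    (hdist : ∀ k k', n ≤ k → n ≤ k' → k ≠ k' → lam k ≠ lam k')
    (hgap : ∀ k k', n ≤ k → k ≤ k' → k' ≤ k + k₁ →
      |1 / lam k - 1 / lam k'| ≤ γ * ((k : ℝ) ^ 3)⁻¹)
    (S : ℕ → Finset ℕ)
    (hcard : ∀ j, 1 ≤ j → (S j).card ≤ s)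
    (hmin : ∀ j, 1 ≤ j → ∀ k ∈ S j, c₄ * (j : ℝ) ≤ (k : ℝ))
    (hdiam : ∀ j, 1 ≤ j → ∀ k ∈ S j, ∀ k' ∈ S j, k' ≤ k + k₁)
    (hsum : ∀ j, 1 ≤ j → |∑ k ∈ S j, c k * b k / lam k| ≤ c₅ / (j : ℝ) ^ 2) :
    ∃ C₃ > (0 : ℝ), ∀ t ≥ (0 : ℝ), ∀ j : ℕ, (n : ℝ) ≤ c₄ * (j : ℝ) →
      (∫ τ in (0:ℝ)..t, |∑ k ∈ S j, c k * b k * Real.exp (lam k * τ)|) ≤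
        C₃ / (j : ℝ) ^ 2 := by
  refine ⟨c₅ + 2*(s:ℝ)*c₁*c₂*γ*(1+(k₁:ℝ))/c₄^2, by positivity, ?_⟩
  intro t ht j hj
  have hj1 : 1 ≤ j := by
    by_contra h
    push_neg at h
    interval_cases j
    simp at hj
    have h1 : (1:ℝ) ≤ (n:ℝ) := by exact_mod_cast hn
    linarith
  have hjR : (1:ℝ) ≤ (j:ℝ) := by exact_mod_cast hj1
  have hjR0 : (0:ℝ) < (j:ℝ) := by linarith
  have hnk : ∀ k ∈ S j, n ≤ k := by
    intro k hk
    have h1 := hmin j hj1 k hk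
    exact_mod_cast le_trans hj h1
  have hk1R : ∀ k ∈ S j, (1:ℝ) ≤ (k:ℝ) := by
    intro k hk
    have h1 := hnk k hk
    exact_mod_cast le_trans hn h1
  have hneg : ∀ k ∈ S j, lam k < 0 := by
    intro k hk
    have h1 := hlam k (hnk k hk)
    have h2 := hk1R k hk
    have h3 : (0:ℝ) < (k:ℝ)^2 := by nlinarith
    nlinarith [mul_pos hc₃ h3]
  rcases (S j).eq_empty_or_nonempty with he | hne
  · simp [he]
    positivity
  set k₀ := (S j).min' hne with hk₀def
  have hk₀ : k₀ ∈ S j := Finset.min'_mem _ _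
  have hneg0 : lam k₀ < 0 := hneg k₀ hk₀
  set a : ℕ → ℝ := fun k => c k * b k / lam k with ha
  set G : ℝ → ℝ := fun τ => |∑ k ∈ S j, a k| * ((-lam k₀) * Real.exp (lam k₀ * τ))
      + ∑ k ∈ S j, |a k| * |lam k * Real.exp (lam k * τ) - lam k₀ * Real.exp (lam k₀ * τ)| with hG
  -- pointwise bound
  have hGle : ∀ τ : ℝ, |∑ k ∈ S j, c k * b k * Real.exp (lam k * τ)| ≤ G τ := by
    intro τ
    have hFeq : ∑ k ∈ S j, c k * b k * Real.exp (lam k * τ)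
        = (∑ k ∈ S j, a k) * (lam k₀ * Real.exp (lam k₀ * τ))
          + ∑ k ∈ S j, a k * (lam k * Real.exp (lam k * τ) - lam k₀ * Real.exp (lam k₀ * τ)) := by
      have h1 : ∀ k ∈ S j, c k * b k * Real.exp (lam k * τ) = a k * (lam k * Real.exp (lam k * τ)) := by
        intro k hk
        have h0 : lam k ≠ 0 := (hneg k hk).ne
        rw [ha]
        field_simp
      rw [Finset.sum_congr rfl h1]
      simp only [mul_sub]
      rw [Finset.sum_sub_distrib, ← Finset.sum_mul]
      ring
    rw [hFeq, hG]
    refine (abs_add_le _ _).trans (add_le_add ?_ ?_)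
    · rw [abs_mul, abs_mul, abs_of_neg hneg0, abs_of_pos (Real.exp_pos _)]
    · exact (Finset.abs_sum_le_sum_abs _ _).trans
        (le_of_eq (Finset.sum_congr rfl fun k _ => abs_mul _ _))
  -- continuity / integrability
  have hcontF : Continuous fun τ : ℝ => |∑ k ∈ S j, c k * b k * Real.exp (lam k * τ)| :=
    (continuous_finset_sum _ fun k _ => continuous_const.mul (cexp_cont (lam k))).abs
  have hcont1 : Continuous fun τ : ℝ => |∑ k ∈ S j, a k| * ((-lam k₀) * Real.exp (lam k₀ * τ)) :=
    continuous_const.mul (continuous_const.mul (cexp_cont (lam k₀)))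
  have hcontT : ∀ k : ℕ, Continuous fun τ : ℝ =>
      |a k| * |lam k * Real.exp (lam k * τ) - lam k₀ * Real.exp (lam k₀ * τ)| := fun k =>
    continuous_const.mul ((continuous_const.mul (cexp_cont (lam k))).sub
      (continuous_const.mul (cexp_cont (lam k₀)))).abs
  have hcontG : Continuous G := by
    rw [hG]
    exact hcont1.add (continuous_finset_sum _ fun k _ => hcontT k)
  have hI1 : (∫ τ in (0:ℝ)..t, |∑ k ∈ S j, c k * b k * Real.exp (lam k * τ)|)
      ≤ ∫ τ in (0:ℝ)..t, G τ :=
    intervalIntegral.integral_mono_on ht (hcontF.intervalIntegrable _ _)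
      (hcontG.intervalIntegrable _ _) (fun τ _ => hGle τ)
  -- split the integral of G
  have hGsplit : (∫ τ in (0:ℝ)..t, G τ)
      = |∑ k ∈ S j, a k| * (∫ τ in (0:ℝ)..t, (-lam k₀) * Real.exp (lam k₀ * τ))
        + ∑ k ∈ S j, |a k| * (∫ τ in (0:ℝ)..t,
            |lam k * Real.exp (lam k * τ) - lam k₀ * Real.exp (lam k₀ * τ)|) := by
    rw [hG]
    rw [intervalIntegral.integral_add
        (f := fun τ => |∑ k ∈ S j, a k| * ((-lam k₀) * Real.exp (lam k₀ * τ)))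
        ((continuous_const.mul (continuous_const.mul (cexp_cont (lam k₀)))).intervalIntegrable _ _)
        ((continuous_finset_sum _ fun k _ => hcontT k).intervalIntegrable _ _),
      intervalIntegral.integral_const_mul,
      intervalIntegral.integral_finset_sum (fun k _ => (hcontT k).intervalIntegrable _ _)]
    simp only [intervalIntegral.integral_const_mul]
  -- first term
  have hB1 : |∑ k ∈ S j, a k| * (∫ τ in (0:ℝ)..t, (-lam k₀) * Real.exp (lam k₀ * τ))
      ≤ c₅ / (j:ℝ)^2 := by
    have hs1 : |∑ k ∈ S j, a k| ≤ c₅ / (j:ℝ)^2 := hsum j hj1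
    have hL := L1 (lam k₀) t hneg0 ht
    have hInn : (0:ℝ) ≤ ∫ τ in (0:ℝ)..t, (-lam k₀) * Real.exp (lam k₀ * τ) :=
      intervalIntegral.integral_nonneg ht
        (fun τ _ => mul_nonneg (by linarith) (Real.exp_pos _).le)
    calc |∑ k ∈ S j, a k| * (∫ τ in (0:ℝ)..t, (-lam k₀) * Real.exp (lam k₀ * τ))
        ≤ (c₅ / (j:ℝ)^2) * 1 := mul_le_mul hs1 hL hInn (by positivity)
      _ = c₅ / (j:ℝ)^2 := mul_one _
  -- per-term bound
  have hterm : ∀ k ∈ S j, |a k| * (∫ τ in (0:ℝ)..t,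
        |lam k * Real.exp (lam k * τ) - lam k₀ * Real.exp (lam k₀ * τ)|)
      ≤ 2*c₁*c₂*γ*(1+(k₁:ℝ))/(c₄*(j:ℝ))^2 := by
    intro k hk
    have hkn := hnk k hk
    have hknR := hk1R k hk
    have hnegk := hneg k hk
    obtain ⟨m, hmS, hmgap, hkm⟩ : ∃ m : ℕ, m ∈ S j ∧
        |1/lam k - 1/lam k₀| ≤ γ * (((m:ℝ))^3)⁻¹ ∧ (k:ℝ) ≤ (m:ℝ) + (k₁:ℝ) := by
      rcases le_total k k₀ with h | h
      · refine ⟨k, hk, hgap k k₀ hkn h (hdiam j hj1 k hk k₀ hk₀), ?_⟩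
        have h0 : (0:ℝ) ≤ (k₁:ℝ) := Nat.cast_nonneg _
        linarith
      · refine ⟨k₀, hk₀, ?_, ?_⟩
        · rw [abs_sub_comm]
          exact hgap k₀ k (hnk k₀ hk₀) h (hdiam j hj1 k₀ hk₀ k hk)
        · have h1 := hdiam j hj1 k₀ hk₀ k hk
          exact_mod_cast h1
    have hm1 : (1:ℝ) ≤ (m:ℝ) := hk1R m hmS
    have hmj : c₄*(j:ℝ) ≤ (m:ℝ) := hmin j hj1 m hmS
    have hIb : (∫ τ in (0:ℝ)..t, |lam k * Real.exp (lam k * τ) - lam k₀ * Real.exp (lam k₀ * τ)|)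
        ≤ 2*(-lam k)*(γ * (((m:ℝ))^3)⁻¹) :=
      (L2' (lam k) (lam k₀) t hnegk hneg0 ht).trans
        (mul_le_mul_of_nonneg_left hmgap (by linarith))
    have hak : |a k| ≤ c₂*(c₁*(k:ℝ))/(-lam k) := by
      simp only [ha]
      rw [abs_div, abs_mul, abs_of_neg hnegk]
      have h1 : |c k| * |b k| ≤ c₂ * (c₁*(k:ℝ)) :=
        mul_le_mul (hc k hkn) (hb k hkn) (abs_nonneg _) hc₂.le
      gcongr
      linarith
    have hInn : (0:ℝ) ≤ ∫ τ in (0:ℝ)..t,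
        |lam k * Real.exp (lam k * τ) - lam k₀ * Real.exp (lam k₀ * τ)| :=
      intervalIntegral.integral_nonneg ht (fun τ _ => abs_nonneg _)
    have hstep1 : |a k| * (∫ τ in (0:ℝ)..t,
          |lam k * Real.exp (lam k * τ) - lam k₀ * Real.exp (lam k₀ * τ)|)
        ≤ (c₂*(c₁*(k:ℝ))/(-lam k)) * (2*(-lam k)*(γ * (((m:ℝ))^3)⁻¹)) :=
      mul_le_mul hak hIb hInn (div_nonneg (by positivity) (by linarith))
    have hne0 : lam k ≠ 0 := hnegk.ne
    have hmne0 : ((m:ℝ))^3 ≠ 0 := by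
      have : (0:ℝ) < (m:ℝ) := by linarith [hk1R m hmS]
      positivity
    have hstep2 : (c₂*(c₁*(k:ℝ))/(-lam k)) * (2*(-lam k)*(γ * (((m:ℝ))^3)⁻¹))
        = 2*c₁*c₂*γ*((k:ℝ) * (((m:ℝ))^3)⁻¹) := by
      field_simp
    have hstep3 : (k:ℝ) * (((m:ℝ))^3)⁻¹ ≤ (1+(k₁:ℝ))/(c₄*(j:ℝ))^2 := by
      have hm0 : (0:ℝ) < (m:ℝ) := by linarith
      have hcj : (0:ℝ) < c₄*(j:ℝ) := by positivity
      have hkm2 : (k:ℝ) ≤ (1+(k₁:ℝ))*(m:ℝ) := by nlinarith [Nat.cast_nonneg (α := ℝ) k₁]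
      calc (k:ℝ) * (((m:ℝ))^3)⁻¹ = (k:ℝ) / ((m:ℝ))^3 := by rw [div_eq_mul_inv]
        _ ≤ ((1+(k₁:ℝ))*(m:ℝ)) / ((m:ℝ))^3 := by gcongr
        _ = (1+(k₁:ℝ)) / ((m:ℝ))^2 := by
            rw [div_eq_div_iff (by positivity) (by positivity)]
            ring
        _ ≤ (1+(k₁:ℝ))/(c₄*(j:ℝ))^2 :=
            div_le_div_of_nonneg_left (by positivity) (by positivity)
              (pow_le_pow_left₀ hcj.le hmj 2)
    calc |a k| * (∫ τ in (0:ℝ)..t,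
          |lam k * Real.exp (lam k * τ) - lam k₀ * Real.exp (lam k₀ * τ)|)
        ≤ 2*c₁*c₂*γ*((k:ℝ) * (((m:ℝ))^3)⁻¹) := by rw [← hstep2]; exact hstep1
      _ ≤ 2*c₁*c₂*γ*((1+(k₁:ℝ))/(c₄*(j:ℝ))^2) :=
          mul_le_mul_of_nonneg_left hstep3 (by positivity)
      _ = 2*c₁*c₂*γ*(1+(k₁:ℝ))/(c₄*(j:ℝ))^2 := by ring
  -- sum the per-term bounds
  have hB2 : (∑ k ∈ S j, |a k| * (∫ τ in (0:ℝ)..t,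
        |lam k * Real.exp (lam k * τ) - lam k₀ * Real.exp (lam k₀ * τ)|))
      ≤ (s:ℝ) * (2*c₁*c₂*γ*(1+(k₁:ℝ))/(c₄*(j:ℝ))^2) := by
    have h1 := Finset.sum_le_card_nsmul (S j) _ _ hterm
    rw [nsmul_eq_mul] at h1
    refine h1.trans (mul_le_mul_of_nonneg_right ?_ (by positivity))
    exact_mod_cast hcard j hj1
  -- combine
  have hfinal : (s:ℝ) * (2*c₁*c₂*γ*(1+(k₁:ℝ))/(c₄*(j:ℝ))^2)
      = (2*(s:ℝ)*c₁*c₂*γ*(1+(k₁:ℝ))/c₄^2)/(j:ℝ)^2 := by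
    field_simp
  rw [add_div]
  linarith [hI1, hGsplit.le, hGsplit.ge, hB1, hB2, hfinal.le, hfinal.ge]
end

section
/- Let C > 0 and set q = 1/(4(C+1)). Let a, b : ℕ → [0,∞) be sequences satisfying a_{k+1} ≤ q a_k + (C+1) b_k and b_{k+1} ≤ q b_k + q a_k for all k ∈ ℕ. Then for all k ≥ 1: a_k ≤ 2 (3/4)^k ( a_0 + (C+1) b_0 ) and b_k ≤ 2 (3/4)^k ( a_0 + b_0 ). -/
/-- The coupled difference-inequality estimate from the proof of Theorem 5.1:
with `q = 1/(4(C+1))`, the recursions `a_{k+1} ≤ q a_k + (C+1) b_k` and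
`b_{k+1} ≤ q b_k + q a_k` decay geometrically with ratio `3/4`. -/
theorem stmt_15 (C : ℝ) (hC : 0 < C) (q : ℝ) (hq : q = 1 / (4 * (C + 1)))
    (a b : ℕ → ℝ) (ha : ∀ k, 0 ≤ a k) (hb : ∀ k, 0 ≤ b k)
    (hrec_a : ∀ k, a (k + 1) ≤ q * a k + (C + 1) * b k)
    (hrec_b : ∀ k, b (k + 1) ≤ q * b k + q * a k) :
    ∀ k, 1 ≤ k →
      a k ≤ 2 * (3 / 4 : ℝ) ^ k * (a 0 + (C + 1) * b 0) ∧
      b k ≤ 2 * (3 / 4 : ℝ) ^ k * (a 0 + b 0) := by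
  have hC1 : (0:ℝ) < C + 1 := by linarith
  have hqpos : 0 < q := by rw [hq]; positivity
  have hq4 : q * (4 * (C + 1)) = 1 := by
    rw [hq]; field_simp
  have hqle : q ≤ 1/4 := by
    nlinarith
  -- Lyapunov function M k = a k + 2(C+1) b k
  have hM : ∀ k, a k + 2 * (C + 1) * b k ≤
      (3/4 : ℝ) ^ k * (a 0 + 2 * (C + 1) * b 0) := by
    intro k
    induction k with
    | zero => simp
    | succ n ih =>
      have h1 := hrec_a n
      have h2 := hrec_b n
      have hstep : a (n+1) + 2 * (C + 1) * b (n+1) ≤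
          (3/4) * (a n + 2 * (C + 1) * b n) := by
        have han := ha n
        have hbn := hb n
        nlinarith [mul_nonneg hqpos.le han, mul_nonneg hqpos.le hbn]
      have hpow : (0:ℝ) ≤ (3/4 : ℝ) ^ n := by positivity
      calc a (n+1) + 2 * (C + 1) * b (n+1) ≤ (3/4) * (a n + 2 * (C + 1) * b n) := hstep
        _ ≤ (3/4) * ((3/4 : ℝ) ^ n * (a 0 + 2 * (C + 1) * b 0)) := by nlinarith
        _ = (3/4 : ℝ) ^ (n+1) * (a 0 + 2 * (C + 1) * b 0) := by ring
  intro k _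
  have hMk := hM k
  have hpow : (0:ℝ) ≤ (3/4 : ℝ) ^ k := by positivity
  have ha0 := ha 0
  have hb0 := hb 0
  constructor
  · have := hb k
    nlinarith
  · have hbk : 2 * (C + 1) * b k ≤ (3/4:ℝ)^k * (a 0 + 2 * (C + 1) * b 0) := by
      nlinarith [ha k]
    have : b k ≤ (3/4:ℝ)^k * (a 0 + 2 * (C + 1) * b 0) / (2 * (C + 1)) := by
      rw [le_div_iff₀ (by linarith)]
      linarith [hbk]
    have h2 : (3/4:ℝ)^k * (a 0 + 2 * (C + 1) * b 0) / (2 * (C + 1)) ≤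
        2 * (3/4:ℝ)^k * (a 0 + b 0) := by
      rw [div_le_iff₀ (by linarith)]
      nlinarith [mul_nonneg hpow ha0, mul_nonneg hpow hb0,
        mul_nonneg (mul_nonneg hpow ha0) hC.le, mul_nonneg (mul_nonneg hpow hb0) hC.le]
    linarith
end

section
/- Let r₁₂, r₂₁ > 0 and for k ≥ 1 set μ_k = (2k−1)π/2 and δ_k = r₁₂ r₂₁ / μ_k⁴. Define the ℝ²-valued functions on [0,1]: φ¹_k(z) = (√2 / √(1+δ_k)) · (1, r₂₁/μ_k²) · cos(μ_k z), φ²_k(z) = (√2 / √(1+δ_k)) · (−r₁₂/μ_k², 1) · sin(μ_k z), e¹_k(z) = √2 (cos(μ_k z), 0), and e²_k(z) = √2 (0, sin(μ_k z)). Then the series Σ_{k=1}^∞ ( ∫₀¹ ‖φ¹_k(z) − e¹_k(z)‖₂² dz + ∫₀¹ ‖φ²_k(z) − e²_k(z)‖₂² dz ) converges. -/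
open Real

/-- `μ_k = (2k-1)π/2` from the Appendix of the paper. -/
noncomputable def muApp (k : ℕ) : ℝ := (2 * (k : ℝ) - 1) * Real.pi / 2

/-- `δ_k = r₁₂ r₂₁ / μ_k⁴` from the Appendix of the paper. -/
noncomputable def deltaApp (r₁₂ r₂₁ : ℝ) (k : ℕ) : ℝ := r₁₂ * r₂₁ / muApp k ^ 4

lemma integ_le_const (f : ℝ → ℝ) (B : ℝ) (hf : Continuous f) (h : ∀ z, f z ≤ B) :
    (∫ z in (0:ℝ)..1, f z) ≤ B := by
  calc (∫ z in (0:ℝ)..1, f z) ≤ ∫ _ in (0:ℝ)..1, B := by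
        apply intervalIntegral.integral_mono_on (by norm_num)
          (hf.intervalIntegrable 0 1) intervalIntegrable_const (fun z _ => h z)
    _ = B := by simp

lemma mySqLeSq {n μ : ℝ} (h1 : 1 ≤ n) (h : n ≤ μ) : n ^ 2 ≤ μ ^ 2 := by nlinarith

lemma sq_le_pow4 {n μ : ℝ} (h1 : 1 ≤ n) (h : n ≤ μ) : n ^ 2 ≤ μ ^ 4 :=
  le_trans (mySqLeSq h1 h) (pow_le_pow_right₀ (h1.trans h) (by norm_num))

lemma sq_le_pow8 {n μ : ℝ} (h1 : 1 ≤ n) (h : n ≤ μ) : n ^ 2 ≤ μ ^ 8 :=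
  le_trans (mySqLeSq h1 h) (pow_le_pow_right₀ (h1.trans h) (by norm_num))

lemma ptwise (a b t : ℝ) (ht : t ^ 2 ≤ 1) : (a * t) ^ 2 + (b * t) ^ 2 ≤ a ^ 2 + b ^ 2 := by
  nlinarith [mul_nonneg (add_nonneg (sq_nonneg a) (sq_nonneg b)) (sub_nonneg.2 ht)]

lemma base_summable : Summable (fun i : ℕ => 1 / ((i:ℝ)+1)^2) := by
  have h : Summable (fun n : ℕ => 1 / ((n:ℝ))^2) :=
    (Real.summable_one_div_nat_pow).mpr one_lt_two
  have := (summable_nat_add_iff 1).mpr h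
  simpa using this

set_option maxHeartbeats 1000000 in
/-- Quadratic-closeness estimate (Bari's criterion) from the Appendix for the
coupled diffusion-reaction system: the series over `k ≥ 1` (written `k = i+1`,
`i : ℕ`) of `∫₀¹ ‖φ¹_k - e¹_k‖₂² + ∫₀¹ ‖φ²_k - e²_k‖₂²` converges, where the
squared Euclidean norms of the ℝ²-valued integrands are written out
componentwise:
`φ¹_k(z) = (√2/√(1+δ_k)) (1, r₂₁/μ_k²) cos(μ_k z)`,
`φ²_k(z) = (√2/√(1+δ_k)) (-r₁₂/μ_k², 1) sin(μ_k z)`,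
`e¹_k(z) = √2 (cos(μ_k z), 0)`, `e²_k(z) = √2 (0, sin(μ_k z))`. -/
theorem stmt_19 (r₁₂ r₂₁ : ℝ) (h₁₂ : 0 < r₁₂) (h₂₁ : 0 < r₂₁) :
    Summable fun i : ℕ =>
      (∫ z in (0:ℝ)..1,
        ((Real.sqrt 2 / Real.sqrt (1 + deltaApp r₁₂ r₂₁ (i + 1)) * 1 *
            Real.cos (muApp (i + 1) * z) -
          Real.sqrt 2 * Real.cos (muApp (i + 1) * z)) ^ 2 +
         (Real.sqrt 2 / Real.sqrt (1 + deltaApp r₁₂ r₂₁ (i + 1)) * (r₂₁ / muApp (i + 1) ^ 2) *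
            Real.cos (muApp (i + 1) * z) - 0) ^ 2)) +
      (∫ z in (0:ℝ)..1,
        ((Real.sqrt 2 / Real.sqrt (1 + deltaApp r₁₂ r₂₁ (i + 1)) * (-(r₁₂ / muApp (i + 1) ^ 2)) *
            Real.sin (muApp (i + 1) * z) - 0) ^ 2 +
         (Real.sqrt 2 / Real.sqrt (1 + deltaApp r₁₂ r₂₁ (i + 1)) * 1 *
            Real.sin (muApp (i + 1) * z) -
          Real.sqrt 2 * Real.sin (muApp (i + 1) * z)) ^ 2)) := by
  set K : ℝ := 4*(r₁₂*r₂₁)^2 + 2*r₂₁^2 + 2*r₁₂^2 with hK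
  apply Summable.of_nonneg_of_le (f := fun i : ℕ => K * (1 / ((i:ℝ)+1)^2))
  · intro i
    have h1 : (0:ℝ) ≤ ∫ z in (0:ℝ)..1,
        ((Real.sqrt 2 / Real.sqrt (1 + deltaApp r₁₂ r₂₁ (i + 1)) * 1 *
            Real.cos (muApp (i + 1) * z) -
          Real.sqrt 2 * Real.cos (muApp (i + 1) * z)) ^ 2 +
         (Real.sqrt 2 / Real.sqrt (1 + deltaApp r₁₂ r₂₁ (i + 1)) * (r₂₁ / muApp (i + 1) ^ 2) *
            Real.cos (muApp (i + 1) * z) - 0) ^ 2) :=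
      intervalIntegral.integral_nonneg (by norm_num) (fun z _ => by positivity)
    have h2 : (0:ℝ) ≤ ∫ z in (0:ℝ)..1,
        ((Real.sqrt 2 / Real.sqrt (1 + deltaApp r₁₂ r₂₁ (i + 1)) * (-(r₁₂ / muApp (i + 1) ^ 2)) *
            Real.sin (muApp (i + 1) * z) - 0) ^ 2 +
         (Real.sqrt 2 / Real.sqrt (1 + deltaApp r₁₂ r₂₁ (i + 1)) * 1 *
            Real.sin (muApp (i + 1) * z) -
          Real.sqrt 2 * Real.sin (muApp (i + 1) * z)) ^ 2) :=
      intervalIntegral.integral_nonneg (by norm_num) (fun z _ => by positivity)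
    linarith
  · intro i
    have hpi := Real.pi_gt_three
    set n : ℝ := (i:ℝ) + 1 with hn
    have hn1 : (1:ℝ) ≤ n := by simp [hn]
    set μ : ℝ := muApp (i+1) with hμdef
    have hμval : μ = (2*(i:ℝ)+1) * Real.pi / 2 := by
      rw [hμdef, muApp]; push_cast; ring
    have hμn : n ≤ μ := by rw [hμval, hn]; nlinarith
    have hμpos : 0 < μ := lt_of_lt_of_le (by linarith) hμn
    set d : ℝ := deltaApp r₁₂ r₂₁ (i+1) with hddef
    have hdval : d = r₁₂ * r₂₁ / μ ^ 4 := by rw [hddef, deltaApp, hμdef]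
    have hd0 : 0 ≤ d := by rw [hdval]; positivity
    set s : ℝ := Real.sqrt (1 + d) with hsdef
    have hs2 : s ^ 2 = 1 + d := Real.sq_sqrt (by linarith)
    have hs0 : 0 ≤ s := Real.sqrt_nonneg _
    have hs1 : 1 ≤ s := by nlinarith [hs2, hd0, hs0]
    have hsne : s ≠ 0 := by linarith
    set c : ℝ := Real.sqrt 2 / s with hcdef
    have hc0 : 0 ≤ c := by positivity
    have h2 : (Real.sqrt 2) ^ 2 = 2 := Real.sq_sqrt (by norm_num)
    have hcs : c * s = Real.sqrt 2 := by rw [hcdef]; field_simp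
    have hcs2 : c ^ 2 * s ^ 2 = 2 := by
      calc c ^ 2 * s ^ 2 = (c * s) ^ 2 := by ring
        _ = 2 := by rw [hcs, h2]
    have hc2 : c ^ 2 ≤ 2 := by nlinarith [sq_nonneg c, hs1, hcs2]
    -- (c - √2)^2 ≤ 2 d^2
    have h3 : (c - Real.sqrt 2) * s = Real.sqrt 2 * (1 - s) := by linear_combination hcs
    have key : (c - Real.sqrt 2) ^ 2 * s ^ 2 = 2 * (s - 1) ^ 2 := by
      calc (c - Real.sqrt 2) ^ 2 * s ^ 2 = ((c - Real.sqrt 2) * s) ^ 2 := by ring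
        _ = (Real.sqrt 2 * (1 - s)) ^ 2 := by rw [h3]
        _ = 2 * (s - 1) ^ 2 := by linear_combination ((1-s)^2) * h2
    have hcd : (c - Real.sqrt 2) ^ 2 ≤ 2 * d ^ 2 := by
      have hds : d = (s - 1) * (s + 1) := by linear_combination -hs2
      have e1 : (c - Real.sqrt 2) ^ 2 ≤ (c - Real.sqrt 2) ^ 2 * s ^ 2 := by
        nlinarith [sq_nonneg (c - Real.sqrt 2), hs1]
      have e2 : 2 * (s - 1) ^ 2 ≤ 2 * ((s - 1) * (s + 1)) ^ 2 := by
        nlinarith [sq_nonneg (s - 1), hs1]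
      rw [hds]; linarith [key, e1, e2]
    -- bounds on μ powers
    have hn2μ4 : n ^ 2 ≤ μ ^ 4 := sq_le_pow4 hn1 hμn
    have hn2μ8 : n ^ 2 ≤ μ ^ 8 := sq_le_pow8 hn1 hμn
    have hn0 : (0:ℝ) < n ^ 2 := by positivity
    have hd2 : d ^ 2 = (r₁₂*r₂₁) ^ 2 / μ ^ 8 := by
      rw [hdval]; field_simp
    have hd2le : d ^ 2 ≤ (r₁₂*r₂₁) ^ 2 / n ^ 2 := by
      rw [hd2]; exact div_le_div_of_nonneg_left (by positivity) hn0 hn2μ8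
    have hμ4le : 1 / μ ^ 4 ≤ 1 / n ^ 2 :=
      one_div_le_one_div_of_le hn0 hn2μ4
    -- integral bounds
    have hB1 : (∫ z in (0:ℝ)..1,
        ((c * 1 * Real.cos (μ * z) - Real.sqrt 2 * Real.cos (μ * z)) ^ 2 +
         (c * (r₂₁ / μ ^ 2) * Real.cos (μ * z) - 0) ^ 2)) ≤
        (c - Real.sqrt 2) ^ 2 + (c * (r₂₁ / μ ^ 2)) ^ 2 := by
      apply integ_le_const _ _ (by fun_prop)
      intro z
      have h := ptwise (c - Real.sqrt 2) (c * (r₂₁ / μ ^ 2)) (Real.cos (μ * z))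
        (Real.cos_sq_le_one _)
      calc (c * 1 * Real.cos (μ * z) - Real.sqrt 2 * Real.cos (μ * z)) ^ 2 +
            (c * (r₂₁ / μ ^ 2) * Real.cos (μ * z) - 0) ^ 2
          = ((c - Real.sqrt 2) * Real.cos (μ * z)) ^ 2 +
            ((c * (r₂₁ / μ ^ 2)) * Real.cos (μ * z)) ^ 2 := by ring
        _ ≤ _ := h
    have hB2 : (∫ z in (0:ℝ)..1,
        ((c * (-(r₁₂ / μ ^ 2)) * Real.sin (μ * z) - 0) ^ 2 +
         (c * 1 * Real.sin (μ * z) - Real.sqrt 2 * Real.sin (μ * z)) ^ 2)) ≤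
        (c * (r₁₂ / μ ^ 2)) ^ 2 + (c - Real.sqrt 2) ^ 2 := by
      apply integ_le_const _ _ (by fun_prop)
      intro z
      have h := ptwise (c * (r₁₂ / μ ^ 2)) (c - Real.sqrt 2) (Real.sin (μ * z))
        (Real.sin_sq_le_one _)
      calc (c * (-(r₁₂ / μ ^ 2)) * Real.sin (μ * z) - 0) ^ 2 +
            (c * 1 * Real.sin (μ * z) - Real.sqrt 2 * Real.sin (μ * z)) ^ 2
          = ((c * (r₁₂ / μ ^ 2)) * Real.sin (μ * z)) ^ 2 +
            ((c - Real.sqrt 2) * Real.sin (μ * z)) ^ 2 := by ring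
        _ ≤ _ := h
    -- combine
    have hterm1 : (c * (r₂₁ / μ ^ 2)) ^ 2 ≤ 2 * r₂₁ ^ 2 / n ^ 2 := by
      have : (c * (r₂₁ / μ ^ 2)) ^ 2 = c ^ 2 * r₂₁ ^ 2 * (1 / μ ^ 4) := by
        field_simp
      rw [this]
      calc c ^ 2 * r₂₁ ^ 2 * (1 / μ ^ 4) ≤ 2 * r₂₁ ^ 2 * (1 / n ^ 2) := by
            apply mul_le_mul (mul_le_mul_of_nonneg_right hc2 (sq_nonneg r₂₁)) hμ4le (by positivity) (by positivity)
        _ = 2 * r₂₁ ^ 2 / n ^ 2 := by ring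
    have hterm2 : (c * (r₁₂ / μ ^ 2)) ^ 2 ≤ 2 * r₁₂ ^ 2 / n ^ 2 := by
      have : (c * (r₁₂ / μ ^ 2)) ^ 2 = c ^ 2 * r₁₂ ^ 2 * (1 / μ ^ 4) := by
        field_simp
      rw [this]
      calc c ^ 2 * r₁₂ ^ 2 * (1 / μ ^ 4) ≤ 2 * r₁₂ ^ 2 * (1 / n ^ 2) := by
            apply mul_le_mul (mul_le_mul_of_nonneg_right hc2 (sq_nonneg r₁₂)) hμ4le (by positivity) (by positivity)
        _ = 2 * r₁₂ ^ 2 / n ^ 2 := by ring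
    have htermd : 2 * ((c - Real.sqrt 2) ^ 2) ≤ 4 * ((r₁₂*r₂₁) ^ 2 / n ^ 2) := by
      linarith [hcd, hd2le]
    have := add_le_add hB1 hB2
    calc _ ≤ ((c - Real.sqrt 2) ^ 2 + (c * (r₂₁ / μ ^ 2)) ^ 2) +
            ((c * (r₁₂ / μ ^ 2)) ^ 2 + (c - Real.sqrt 2) ^ 2) := this
      _ ≤ 4 * ((r₁₂*r₂₁) ^ 2 / n ^ 2) + (2 * r₂₁ ^ 2 / n ^ 2 + 2 * r₁₂ ^ 2 / n ^ 2) := by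
          linarith [hterm1, hterm2, htermd]
      _ = K * (1 / n ^ 2) := by rw [hK]; ring
  · exact base_summable.mul_left K
end
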